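/- arXiv:1710.03193 — 5 statements merged into one kernel-verified Lean document; each statement's English description precedes it below -/
import Mathlib

section
/- Let F be a non-abelian free group, let Δ be a decomposition of F, let φ : F → ℝ be a Δ-decomposable quasimorphism and let ψ : F → ℝ be a Δ-continuous symmetric quasimorphism. Then the cup product class [δ¹φ] ⌣ [δ¹ψ] ∈ H⁴_b(F,ℝ) is trivial; concretely, there exists a bounded function β : F³ → ℝ such that δ³β(g₁,g₂,g₃,g₄) = δ¹φ(g₁,g₂)·δ¹ψ(g₃,g₄) for all g₁,g₂,g₃,g₄ ∈ F. -/
/-! Common definitions: free groups, reduced products, (bounded) cochains,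
decompositions of a free group, Brooks and Rolli quasimorphisms. -/

section Preamble

variable {α : Type} [DecidableEq α]

/-- Word length of an element of a free group (length of its reduced word). -/
def wlen (g : FreeGroup α) : ℕ := g.toWord.length

/-- A product `g = g₁ ⋯ g_k` is reduced (no cancellation) if the word lengths add up. -/
def ReducedProd (l : List (FreeGroup α)) : Prop :=
  wlen l.prod = (l.map wlen).sum

/-- Inhomogeneous coboundary `δ¹φ(g,h) = φ(g) + φ(h) − φ(gh)`. -/
def d1 (φ : FreeGroup α → ℝ) (g h : FreeGroup α) : ℝ := φ g + φ h - φ (g * h)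

/-- Inhomogeneous coboundary `δ²η`. -/
def d2 (η : FreeGroup α → FreeGroup α → ℝ) (g h i : FreeGroup α) : ℝ :=
  η h i - η (g * h) i + η g (h * i) - η g h

/-- Inhomogeneous coboundary `δ³β`. -/
def d3 (β : FreeGroup α → FreeGroup α → FreeGroup α → ℝ) (g h i j : FreeGroup α) : ℝ :=
  β h i j - β (g * h) i j + β g (h * i) j - β g h (i * j) + β g h i

/-- A quasimorphism on the free group. -/
def IsQuasimorphism (φ : FreeGroup α → ℝ) : Prop :=
  ∃ D > (0 : ℝ), ∀ g h : FreeGroup α, |d1 φ g h| < D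

/-- A symmetric map: `φ(g⁻¹) = −φ(g)`. -/
def IsSymmetricMap (φ : FreeGroup α → ℝ) : Prop :=
  ∀ g : FreeGroup α, φ g⁻¹ = -φ g

/-- Longest common initial sequence of two lists. -/
def commonPrefix {β : Type} [DecidableEq β] : List β → List β → List β
  | a :: as, b :: bs => if a = b then a :: commonPrefix as bs else []
  | _, _ => []

/-- Reversed, entrywise-inverted list: `(g₁, …, g_k) ↦ (g_k⁻¹, …, g₁⁻¹)`. -/
def seqInv (l : List (FreeGroup α)) : List (FreeGroup α) :=
  (l.map fun x => x⁻¹).reverse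

/-- `(c̲₁⁻¹)`: the common initial sequence of `Δ(g)` and `Δ(gh)`. -/
def cSeq1 (D : FreeGroup α → List (FreeGroup α)) (g h : FreeGroup α) : List (FreeGroup α) :=
  commonPrefix (D g) (D (g * h))

/-- `(c̲₂⁻¹)`: the common initial sequence of `Δ(g⁻¹)` and `Δ(h)`. -/
def cSeq2 (D : FreeGroup α → List (FreeGroup α)) (g h : FreeGroup α) : List (FreeGroup α) :=
  commonPrefix (D g⁻¹) (D h)

/-- `(c̲₃⁻¹)`: the common initial sequence of `Δ(h⁻¹)` and `Δ(h⁻¹g⁻¹)`. -/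
def cSeq3 (D : FreeGroup α → List (FreeGroup α)) (g h : FreeGroup α) : List (FreeGroup α) :=
  commonPrefix (D h⁻¹) (D (h⁻¹ * g⁻¹))

/-- `(r̲₁)`: middle part of `Δ(g) = (c̲₁⁻¹)·(r̲₁)·(c̲₂)`. -/
def rSeq1 (D : FreeGroup α → List (FreeGroup α)) (g h : FreeGroup α) : List (FreeGroup α) :=
  ((D g).drop (cSeq1 D g h).length).take
    ((D g).length - (cSeq1 D g h).length - (cSeq2 D g h).length)

/-- `(r̲₂)`: middle part of `Δ(h) = (c̲₂⁻¹)·(r̲₂)·(c̲₃)`. -/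
def rSeq2 (D : FreeGroup α → List (FreeGroup α)) (g h : FreeGroup α) : List (FreeGroup α) :=
  ((D h).drop (cSeq2 D g h).length).take
    ((D h).length - (cSeq2 D g h).length - (cSeq3 D g h).length)

/-- `(r̲₃)`: middle part of `Δ(h⁻¹g⁻¹) = (c̲₃⁻¹)·(r̲₃)·(c̲₁)`. -/
def rSeq3 (D : FreeGroup α → List (FreeGroup α)) (g h : FreeGroup α) : List (FreeGroup α) :=
  ((D (h⁻¹ * g⁻¹)).drop (cSeq3 D g h).length).take
    ((D (h⁻¹ * g⁻¹)).length - (cSeq3 D g h).length - (cSeq1 D g h).length)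

/-- A decomposition `Δ` of the free group `F` into pieces `P` (Definition 3.1). -/
structure Decomp (α : Type) [DecidableEq α] where
  /-- the set of pieces -/
  pieces : Set (FreeGroup α)
  /-- the decomposition map `Δ` -/
  D : FreeGroup α → List (FreeGroup α)
  /-- the uniform bound `R` on the r-parts of `Δ`-triangles -/
  R : ℕ
  R_pos : 0 < R
  pieces_symm : ∀ p ∈ pieces, p⁻¹ ∈ pieces
  one_notin_pieces : (1 : FreeGroup α) ∉ pieces
  mem_pieces : ∀ g : FreeGroup α, ∀ p ∈ D g, p ∈ pieces
  prod_eq : ∀ g : FreeGroup α, (D g).prod = g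
  reduced : ∀ g : FreeGroup α, ReducedProd (D g)
  inv_eq : ∀ g : FreeGroup α, D g⁻¹ = seqInv (D g)
  infix_closed : ∀ (g : FreeGroup α) (l₁ l₂ l₃ : List (FreeGroup α)),
    D g = l₁ ++ l₂ ++ l₃ → D l₂.prod = l₂
  triangle₁ : ∀ g h : FreeGroup α, D g = cSeq1 D g h ++ rSeq1 D g h ++ seqInv (cSeq2 D g h)
  triangle₂ : ∀ g h : FreeGroup α, D h = cSeq2 D g h ++ rSeq2 D g h ++ seqInv (cSeq3 D g h)
  triangle₃ : ∀ g h : FreeGroup α,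
    D (h⁻¹ * g⁻¹) = cSeq3 D g h ++ rSeq3 D g h ++ seqInv (cSeq1 D g h)
  rBound₁ : ∀ g h : FreeGroup α, (rSeq1 D g h).length ≤ R
  rBound₂ : ∀ g h : FreeGroup α, (rSeq2 D g h).length ≤ R
  rBound₃ : ∀ g h : FreeGroup α, (rSeq3 D g h).length ≤ R

/-- The `Δ`-decomposable map `φ_{λ,Δ}(g) = Σ_j λ(g_j)`. -/
def decQM (D : FreeGroup α → List (FreeGroup α)) (lam : FreeGroup α → ℝ)
    (g : FreeGroup α) : ℝ :=
  ((D g).map lam).sum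

/-- `φ` is a `Δ`-decomposable quasimorphism (Definition 3.8). -/
def IsDecomposable (dec : Decomp α) (φ : FreeGroup α → ℝ) : Prop :=
  ∃ lam : FreeGroup α → ℝ,
    (∃ B : ℝ, ∀ p ∈ dec.pieces, |lam p| ≤ B) ∧
    (∀ p ∈ dec.pieces, lam p⁻¹ = -lam p) ∧
    φ = decQM dec.D lam

/-- Agreement (as an extended natural number) of two sequences:
`⊤` if they are equal, otherwise the length of their common initial sequence. -/
def seqAgree {β : Type} [DecidableEq β] (l l' : List β) : ℕ∞ :=
  if l = l' then ⊤ else ((commonPrefix l l').length : ℕ∞)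

/-- The quantity `N_Δ((g,h),(g',h'))` measuring how much the `Δ`-triangles of the two
pairs agree around their centres. -/
noncomputable def NDelta (D : FreeGroup α → List (FreeGroup α))
    (p q : FreeGroup α × FreeGroup α) : ℕ∞ :=
  if p = q then ⊤
  else if rSeq1 D p.1 p.2 = rSeq1 D q.1 q.2 ∧ rSeq2 D p.1 p.2 = rSeq2 D q.1 q.2 ∧
            rSeq3 D p.1 p.2 = rSeq3 D q.1 q.2 then
    min (seqAgree (seqInv (cSeq1 D p.1 p.2)) (seqInv (cSeq1 D q.1 q.2)))
      (min (seqAgree (seqInv (cSeq2 D p.1 p.2)) (seqInv (cSeq2 D q.1 q.2)))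
        (seqAgree (seqInv (cSeq3 D p.1 p.2)) (seqInv (cSeq3 D q.1 q.2))))
  else 0

/-- A bounded symmetric `2`-cocycle `ω` is `Δ`-continuous (Definition 3.12). -/
def DeltaContinuousCocycle (D : FreeGroup α → List (FreeGroup α))
    (ω : FreeGroup α → FreeGroup α → ℝ) : Prop :=
  ∃ s : ℕ → ℝ, (∀ j, 0 ≤ s j) ∧ Summable s ∧
    ∀ p q : FreeGroup α × FreeGroup α, p ≠ q → ∀ N : ℕ, NDelta D p q = (N : ℕ∞) →
      |ω p.1 p.2 - ω q.1 q.2| ≤ s N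

/-- A quasimorphism `ψ` is `Δ`-continuous: it is symmetric and `δ¹ψ` is `Δ`-continuous. -/
def DeltaContinuousQM (D : FreeGroup α → List (FreeGroup α)) (ψ : FreeGroup α → ℝ) : Prop :=
  IsSymmetricMap ψ ∧ IsQuasimorphism ψ ∧ DeltaContinuousCocycle D (d1 ψ)

/-- `ζ`-type sums: `zetaL A (g₁,…,g_k) g' h = Σ_j A(g_j, g_{j+1}⋯g_k·g', h)`. -/
def zetaL (A : FreeGroup α → FreeGroup α → FreeGroup α → ℝ) :
    List (FreeGroup α) → FreeGroup α → FreeGroup α → ℝ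
  | [], _, _ => 0
  | p :: rest, g', h => A p (rest.prod * g') h + zetaL A rest g' h

/-- `ζ(g,g',h) = Σ_j φ(g_j)·ω(g_{j+1}⋯g_k·g', h)` for `Δ(g) = (g₁,…,g_k)`. -/
def zetaD (D : FreeGroup α → List (FreeGroup α)) (φ : FreeGroup α → ℝ)
    (ω : FreeGroup α → FreeGroup α → ℝ) (g g' h : FreeGroup α) : ℝ :=
  zetaL (fun p u v => φ p * ω u v) (D g) g' h

/-- `w` is a subword of `g` (as reduced words). -/
def Subword (w g : FreeGroup α) : Prop :=
  w.toWord <:+: g.toWord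

/-- `w` is non self-overlapping: there are no reduced words `x, y` with `x` nontrivial
such that `w = xyx` as a reduced word. -/
def NonSelfOverlapping (w : FreeGroup α) : Prop :=
  ¬∃ x y : FreeGroup α, x ≠ 1 ∧ w = x * y * x ∧ ReducedProd [x, y, x]

/-- `ν_w(g)`: the number of occurrences of `w` as a subword of the reduced word `g`. -/
def occCount (w g : FreeGroup α) : ℕ :=
  ((List.range (g.toWord.length + 1)).filter
    (fun s => decide ((g.toWord.drop s).take w.toWord.length = w.toWord))).length

/-- The Brooks counting function `φ_w = ν_w − ν_{w⁻¹}`. -/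
noncomputable def brooksQM (w : FreeGroup α) (g : FreeGroup α) : ℝ :=
  (occCount w g : ℝ) - (occCount w⁻¹ g : ℝ)

/-- `φ` is a Brooks counting quasimorphism on some non self-overlapping word. -/
def IsBrooksQM (φ : FreeGroup α → ℝ) : Prop :=
  ∃ w : FreeGroup α, NonSelfOverlapping w ∧ φ = brooksQM w

/-- The interleaved list `(u₁, w^{ε₁}, u₂, …, u_{k−1}, w^{ε_{k−1}}, u_k)` built from
`us = (u₁,…,u_k)` and signs `eps = (ε₁,…,ε_{k−1})`. -/
def wfacList (w : FreeGroup α) : List (FreeGroup α) → List Bool → List (FreeGroup α)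
  | [], _ => []
  | [u], _ => [u]
  | u :: us, [] => u :: wfacList w us []
  | u :: us, e :: eps => u :: (if e then w else w⁻¹) :: wfacList w us eps

/-- `RolliWord l` : `l = ((n₁,m₁),…,(n_k,m_k))` encodes the normal form
`x_{n₁}^{m₁} ⋯ x_{n_k}^{m_k}` (all `m_j ≠ 0`, no consecutive equal indices). -/
def RolliWord {n : ℕ} (l : List (Fin n × ℤ)) : Prop :=
  (∀ p ∈ l, p.2 ≠ 0) ∧ l.Chain' fun p q => p.1 ≠ q.1

/-- The element `x_{n₁}^{m₁} ⋯ x_{n_k}^{m_k}` encoded by `l`. -/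
def rolliProd {n : ℕ} (l : List (Fin n × ℤ)) : FreeGroup (Fin n) :=
  (l.map fun p => FreeGroup.of p.1 ^ p.2).prod

/-- `φ` is a Rolli quasimorphism. -/
def IsRolliQM {n : ℕ} (φ : FreeGroup (Fin n) → ℝ) : Prop :=
  ∃ lam : Fin n → ℤ → ℝ,
    (∀ j, ∃ B : ℝ, ∀ m : ℤ, |lam j m| ≤ B) ∧
    (∀ j m, lam j (-m) = -lam j m) ∧
    φ 1 = 0 ∧
    ∀ l : List (Fin n × ℤ), RolliWord l → φ (rolliProd l) = (l.map fun p => lam p.1 p.2).sum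

/-- The list of letters (as group elements) of the reduced word representing `g`. -/
def letters (g : FreeGroup α) : List (FreeGroup α) :=
  g.toWord.map fun p => FreeGroup.mk [p]

/-- `d` is the common 2-path of `(g,h)`: `g = t₁⁻¹d` and `h = d⁻¹t₂` as reduced words,
with the tripod condition that `gh = t₁⁻¹t₂` is also reduced. -/
def IsCommon2Path (g h d : FreeGroup α) : Prop :=
  ∃ t₁ t₂ : FreeGroup α, g = t₁⁻¹ * d ∧ h = d⁻¹ * t₂ ∧
    ReducedProd [t₁⁻¹, d] ∧ ReducedProd [d⁻¹, t₂] ∧ ReducedProd [t₁⁻¹, t₂]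

/-- Case (a) of the alignment of `g, h, i` (Figure 4a). -/
def Align3A (g h i : FreeGroup α) : Prop :=
  ∃ t₁ t₂ t₃ t₄ t₅ : FreeGroup α,
    g = t₁ * t₂ ∧ h = t₂⁻¹ * t₃ * t₄ ∧ i = t₄⁻¹ * t₅ ∧
    ReducedProd [t₁, t₂] ∧ ReducedProd [t₂⁻¹, t₃, t₄] ∧ ReducedProd [t₄⁻¹, t₅] ∧
    ReducedProd [t₁, t₃, t₅]

/-- Case (b) of the alignment of `g, h, i` (Figure 4b). -/
def Align3B (g h i : FreeGroup α) : Prop :=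
  ∃ t₁ t₂ t₃ t₄ t₅ : FreeGroup α,
    g = t₁ * t₂ * t₃ ∧ h = t₃⁻¹ * t₄ ∧ i = t₄⁻¹ * t₂⁻¹ * t₅ ∧
    ReducedProd [t₁, t₂, t₃] ∧ ReducedProd [t₃⁻¹, t₄] ∧ ReducedProd [t₄⁻¹, t₂⁻¹, t₅] ∧
    ReducedProd [t₁, t₅]

/-- Case (c) of the alignment of `g, h, i` (Figure 4c), with common 3-path `c`. -/
def Align3C (g h i c : FreeGroup α) : Prop :=
  ∃ t₁ t₂ t₃ t₄ : FreeGroup α,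
    g = t₁⁻¹ * c * t₂ ∧ h = t₂⁻¹ * c⁻¹ * t₃ ∧ i = t₃⁻¹ * c * t₄ ∧
    ReducedProd [t₁⁻¹, c, t₂] ∧ ReducedProd [t₂⁻¹, c⁻¹, t₃] ∧ ReducedProd [t₃⁻¹, c, t₄] ∧
    ReducedProd [t₁⁻¹, t₃] ∧ ReducedProd [t₂⁻¹, t₄]

/-- `c` is the common 3-path of `(g,h,i)`: `c` in case (c), the identity otherwise. -/
def IsCommon3Path (g h i c : FreeGroup α) : Prop :=
  Align3C g h i c ∨ (c = 1 ∧ (Align3A g h i ∨ Align3B g h i))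

end Preamble


/-! ### Auxiliary machinery for Statement 1 -/

set_option linter.unusedSectionVars false

namespace CupTrivAux

variable {α : Type} [DecidableEq α]

/-- Weighted sum `Σ_j lam(l_j)·ω(l_{j+1}⋯l_k·w, v)` over a list of pieces. -/
noncomputable def Z0 (lam : FreeGroup α → ℝ) (ω : FreeGroup α → FreeGroup α → ℝ) :
    List (FreeGroup α) → FreeGroup α → FreeGroup α → ℝ
  | [], _, _ => 0
  | p :: l, w, v => lam p * ω (l.prod * w) v + Z0 lam ω l w v

/-- Weighted sum `Σ_j lam(l_j)·ω(l_j·l_{j+1}⋯l_k·w, v)` over a list of pieces. -/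
noncomputable def Z1 (lam : FreeGroup α → ℝ) (ω : FreeGroup α → FreeGroup α → ℝ) :
    List (FreeGroup α) → FreeGroup α → FreeGroup α → ℝ
  | [], _, _ => 0
  | p :: l, w, v => lam p * ω (p * (l.prod * w)) v + Z1 lam ω l w v

variable (lam : FreeGroup α → ℝ) (ω : FreeGroup α → FreeGroup α → ℝ)

@[simp] lemma Z0_nil (w v : FreeGroup α) : Z0 lam ω [] w v = 0 := rfl

@[simp] lemma Z0_cons (p : FreeGroup α) (l : List (FreeGroup α)) (w v : FreeGroup α) :
    Z0 lam ω (p :: l) w v = lam p * ω (l.prod * w) v + Z0 lam ω l w v := rfl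

@[simp] lemma Z1_nil (w v : FreeGroup α) : Z1 lam ω [] w v = 0 := rfl

@[simp] lemma Z1_cons (p : FreeGroup α) (l : List (FreeGroup α)) (w v : FreeGroup α) :
    Z1 lam ω (p :: l) w v = lam p * ω (p * (l.prod * w)) v + Z1 lam ω l w v := rfl

lemma Z0_append (l₁ l₂ : List (FreeGroup α)) (w v : FreeGroup α) :
    Z0 lam ω (l₁ ++ l₂) w v = Z0 lam ω l₁ (l₂.prod * w) v + Z0 lam ω l₂ w v := by
  induction l₁ with
  | nil => simp
  | cons p t ih =>
      rw [List.cons_append, Z0_cons, ih, List.prod_append, mul_assoc, Z0_cons]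
      ring

lemma Z1_append (l₁ l₂ : List (FreeGroup α)) (w v : FreeGroup α) :
    Z1 lam ω (l₁ ++ l₂) w v = Z1 lam ω l₁ (l₂.prod * w) v + Z1 lam ω l₂ w v := by
  induction l₁ with
  | nil => simp
  | cons p t ih =>
      rw [List.cons_append, Z1_cons, ih, List.prod_append, mul_assoc, Z1_cons]
      ring

lemma seqInv_nil : seqInv ([] : List (FreeGroup α)) = [] := rfl

lemma seqInv_cons (p : FreeGroup α) (l : List (FreeGroup α)) :
    seqInv (p :: l) = seqInv l ++ [p⁻¹] := by
  simp [seqInv]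

lemma seqInv_append (l₁ l₂ : List (FreeGroup α)) :
    seqInv (l₁ ++ l₂) = seqInv l₂ ++ seqInv l₁ := by
  simp [seqInv]

lemma seqInv_seqInv (l : List (FreeGroup α)) : seqInv (seqInv l) = l := by
  simp [seqInv, List.map_reverse, List.map_map]

lemma seqInv_length (l : List (FreeGroup α)) : (seqInv l).length = l.length := by
  simp [seqInv]

lemma mem_seqInv {l : List (FreeGroup α)} {p : FreeGroup α} (hp : p ∈ seqInv l) :
    ∃ q ∈ l, p = q⁻¹ := by
  simp only [seqInv, List.mem_reverse, List.mem_map] at hp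
  obtain ⟨q, hq, rfl⟩ := hp
  exact ⟨q, hq, rfl⟩

lemma Z0_seqInv (l : List (FreeGroup α)) (w v : FreeGroup α)
    (hs : ∀ p ∈ l, lam p⁻¹ = -lam p) :
    Z0 lam ω (seqInv l) (l.prod * w) v = -(Z1 lam ω l w v) := by
  induction l generalizing w with
  | nil => rw [seqInv_nil]; simp
  | cons q t ih =>
      rw [seqInv_cons, Z0_append]
      have e : (([q⁻¹] : List (FreeGroup α)).prod) * ((q :: t).prod * w) = t.prod * w := by
        simp [List.prod_cons, mul_assoc]
      rw [e, ih w (fun p hp => hs p (List.mem_cons_of_mem _ hp))]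
      have hq := hs q List.mem_cons_self
      simp only [Z0_cons, Z0_nil, Z1_cons, List.prod_nil, List.prod_cons, one_mul, hq,
        mul_assoc]
      ring

lemma Z1_seqInv (l : List (FreeGroup α)) (w v : FreeGroup α)
    (hs : ∀ p ∈ l, lam p⁻¹ = -lam p) :
    Z1 lam ω (seqInv l) (l.prod * w) v = -(Z0 lam ω l w v) := by
  induction l generalizing w with
  | nil => rw [seqInv_nil]; simp
  | cons q t ih =>
      rw [seqInv_cons, Z1_append]
      have e : (([q⁻¹] : List (FreeGroup α)).prod) * ((q :: t).prod * w) = t.prod * w := by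
        simp [List.prod_cons, mul_assoc]
      rw [e, ih w (fun p hp => hs p (List.mem_cons_of_mem _ hp))]
      have hq := hs q List.mem_cons_self
      have e2 : q⁻¹ * (([] : List (FreeGroup α)).prod * ((q :: t).prod * w)) = t.prod * w := by
        simp [List.prod_cons, mul_assoc]
      simp only [Z1_cons, Z1_nil, Z0_cons, e2, hq]
      ring

lemma Z0_push
    (hco : ∀ u v w : FreeGroup α, ω (u * v) w = ω v w + ω u (v * w) - ω u v)
    (l : List (FreeGroup α)) (h i : FreeGroup α) :
    Z0 lam ω l h i =
      Z0 lam ω l 1 (h * i) - Z0 lam ω l 1 h + ((l.map lam).sum) * ω h i := by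
  induction l with
  | nil => simp
  | cons p t ih =>
      simp only [Z0_cons, List.map_cons, List.sum_cons, mul_one]
      linear_combination ih + lam p * hco t.prod h i

lemma Z1_push
    (hco : ∀ u v w : FreeGroup α, ω (u * v) w = ω v w + ω u (v * w) - ω u v)
    (l : List (FreeGroup α)) (h i : FreeGroup α) :
    Z1 lam ω l h i =
      Z1 lam ω l 1 (h * i) - Z1 lam ω l 1 h + ((l.map lam).sum) * ω h i := by
  induction l with
  | nil => simp
  | cons p t ih =>
      have hc := hco (p * t.prod) h i
      rw [mul_assoc] at hc
      simp only [Z1_cons, List.map_cons, List.sum_cons, mul_one]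
      linear_combination ih + lam p * hc

lemma Z0_bound (l : List (FreeGroup α)) (w v : FreeGroup α) (B Dd : ℝ)
    (hB : ∀ p ∈ l, |lam p| ≤ B) (hΩ : ∀ u v, |ω u v| ≤ Dd) :
    |Z0 lam ω l w v| ≤ (l.length : ℝ) * (B * Dd) := by
  induction l with
  | nil => simp
  | cons p t ih =>
      have h1 : |lam p * ω (t.prod * w) v| ≤ B * Dd := by
        rw [abs_mul]
        exact mul_le_mul (hB p List.mem_cons_self) (hΩ _ _) (abs_nonneg _)
          (le_trans (abs_nonneg _) (hB p List.mem_cons_self))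
      have h2 := ih (fun p hp => hB p (List.mem_cons_of_mem _ hp))
      calc |Z0 lam ω (p :: t) w v| ≤ |lam p * ω (t.prod * w) v| + |Z0 lam ω t w v| := by
            rw [Z0_cons]; exact abs_add_le _ _
        _ ≤ B * Dd + (t.length : ℝ) * (B * Dd) := add_le_add h1 h2
        _ = ((p :: t).length : ℝ) * (B * Dd) := by
            simp [List.length_cons]; push_cast; ring

lemma Z1_bound (l : List (FreeGroup α)) (w v : FreeGroup α) (B Dd : ℝ)
    (hB : ∀ p ∈ l, |lam p| ≤ B) (hΩ : ∀ u v, |ω u v| ≤ Dd) :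
    |Z1 lam ω l w v| ≤ (l.length : ℝ) * (B * Dd) := by
  induction l with
  | nil => simp
  | cons p t ih =>
      have h1 : |lam p * ω (p * (t.prod * w)) v| ≤ B * Dd := by
        rw [abs_mul]
        exact mul_le_mul (hB p List.mem_cons_self) (hΩ _ _) (abs_nonneg _)
          (le_trans (abs_nonneg _) (hB p List.mem_cons_self))
      have h2 := ih (fun p hp => hB p (List.mem_cons_of_mem _ hp))
      calc |Z1 lam ω (p :: t) w v| ≤ |lam p * ω (p * (t.prod * w)) v| + |Z1 lam ω t w v| := by
            rw [Z1_cons]; exact abs_add_le _ _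
        _ ≤ B * Dd + (t.length : ℝ) * (B * Dd) := add_le_add h1 h2
        _ = ((p :: t).length : ℝ) * (B * Dd) := by
            simp [List.length_cons]; push_cast; ring

end CupTrivAux

set_option maxHeartbeats 1600000

/-- Theorem B: if `φ` is `Δ`-decomposable and `ψ` is a `Δ`-continuous
symmetric quasimorphism, then the cup product `[δ¹φ] ⌣ [δ¹ψ] ∈ H⁴_b(F,ℝ)` is trivial:
there is a bounded `β` with `δ³β = δ¹φ ⌣ δ¹ψ`. -/
theorem cup_product_decomposable_continuous_trivial {α : Type} [Fintype α] [DecidableEq α]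
    (hab : ∃ a b : α, a ≠ b) (dec : Decomp α) (φ ψ : FreeGroup α → ℝ)
    (hφ : IsDecomposable dec φ)
    (hψ : DeltaContinuousQM dec.D ψ) :
    ∃ β : FreeGroup α → FreeGroup α → FreeGroup α → ℝ,
      (∃ C : ℝ, ∀ g h i, |β g h i| ≤ C) ∧
      ∀ g₁ g₂ g₃ g₄ : FreeGroup α,
        d3 β g₁ g₂ g₃ g₄ = d1 φ g₁ g₂ * d1 ψ g₃ g₄ := by
  classical
  obtain ⟨lam, ⟨B0, hB0⟩, hlsym, hphi⟩ := hφ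
  obtain ⟨-, ⟨Dq, hDq0, hDqlt⟩, -⟩ := hψ
  -- the bounded cocycle `ω := δ¹ψ` and its cocycle identity
  have hco : ∀ u v w : FreeGroup α,
      d1 ψ (u * v) w = d1 ψ v w + d1 ψ u (v * w) - d1 ψ u v := by
    intro u v w
    simp only [d1]
    rw [mul_assoc]
    ring
  have hΩ : ∀ u v : FreeGroup α, |d1 ψ u v| ≤ Dq := fun u v => le_of_lt (hDqlt u v)
  set B : ℝ := max B0 0 with hBdef
  have hBp : ∀ p ∈ dec.pieces, |lam p| ≤ B := fun p hp => (hB0 p hp).trans (le_max_left _ _)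
  have hBnn : 0 ≤ B := le_max_right _ _
  have hDqnn : 0 ≤ Dq := le_of_lt hDq0
  have hBD : 0 ≤ B * Dq := mul_nonneg hBnn hDqnn
  -- the two correction cochains
  refine ⟨fun g h i =>
      φ g * d1 ψ h i
        + d2 (fun u v => CupTrivAux.Z0 lam (d1 ψ) (dec.D u) 1 v) g h i
        - (1/2) * d2 (fun u v => CupTrivAux.Z0 lam (d1 ψ) (dec.D u) 1 v
            - CupTrivAux.Z1 lam (d1 ψ) (dec.D u) 1 v) g h i,
    ⟨6 * ((dec.R : ℝ) * (B * Dq)), ?_⟩, ?_⟩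
  · -- boundedness
    intro g h i
    simp only []
    obtain ⟨a, r1, c2, r2, c3, r3, hDg, hDh, hD3, hl1, hl2, hl3⟩ :
        ∃ a r1 c2 r2 c3 r3 : List (FreeGroup α),
          dec.D g = a ++ r1 ++ seqInv c2 ∧ dec.D h = c2 ++ r2 ++ seqInv c3 ∧
          dec.D (h⁻¹ * g⁻¹) = c3 ++ r3 ++ seqInv a ∧
          r1.length ≤ dec.R ∧ r2.length ≤ dec.R ∧ r3.length ≤ dec.R :=
      ⟨cSeq1 dec.D g h, rSeq1 dec.D g h, cSeq2 dec.D g h, rSeq2 dec.D g h,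
        cSeq3 dec.D g h, rSeq3 dec.D g h, dec.triangle₁ g h, dec.triangle₂ g h,
        dec.triangle₃ g h, dec.rBound₁ g h, dec.rBound₂ g h, dec.rBound₃ g h⟩
    have hDgh : dec.D (g * h) = a ++ (seqInv r3 ++ seqInv c3) := by
      have h1 := dec.inv_eq (h⁻¹ * g⁻¹)
      rw [mul_inv_rev, inv_inv, inv_inv] at h1
      rw [h1, hD3, CupTrivAux.seqInv_append, CupTrivAux.seqInv_append,
        CupTrivAux.seqInv_seqInv]
    -- membership facts
    have hmem_r1 : ∀ p ∈ r1, |lam p| ≤ B := by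
      intro p hp
      refine hBp p (dec.mem_pieces g p ?_)
      rw [hDg]
      exact List.mem_append_left _ (List.mem_append_right _ hp)
    have hmem_r2 : ∀ p ∈ r2, |lam p| ≤ B := by
      intro p hp
      refine hBp p (dec.mem_pieces h p ?_)
      rw [hDh]
      exact List.mem_append_left _ (List.mem_append_right _ hp)
    have hmem_r3 : ∀ p ∈ seqInv r3, |lam p| ≤ B := by
      intro p hp
      obtain ⟨q, hq, rfl⟩ := CupTrivAux.mem_seqInv hp
      refine hBp _ (dec.pieces_symm q (dec.mem_pieces (h⁻¹ * g⁻¹) q ?_))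
      rw [hD3]
      exact List.mem_append_left _ (List.mem_append_right _ hq)
    have hsc2 : ∀ p ∈ c2, lam p⁻¹ = -lam p := by
      intro p hp
      refine hlsym p (dec.mem_pieces h p ?_)
      rw [hDh]
      exact List.mem_append_left _ (List.mem_append_left _ hp)
    -- product bookkeeping
    have hpg : a.prod * r1.prod * (seqInv c2).prod = g := by
      have h0 := dec.prod_eq g
      rw [hDg, List.prod_append, List.prod_append] at h0
      exact h0
    have hph : c2.prod * r2.prod * (seqInv c3).prod = h := by
      have h0 := dec.prod_eq h
      rw [hDh, List.prod_append, List.prod_append] at h0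
      exact h0
    have hpgh : a.prod * ((seqInv r3).prod * (seqInv c3).prod) = g * h := by
      have h0 := dec.prod_eq (g * h)
      rw [hDgh, List.prod_append, List.prod_append] at h0
      exact h0
    have key : r1.prod * ((seqInv c2).prod * h) = (seqInv r3 ++ seqInv c3).prod * 1 := by
      have e1 : a.prod * (r1.prod * ((seqInv c2).prod * h)) = g * h := by
        rw [← mul_assoc, ← mul_assoc, hpg]
      have e2 : a.prod * ((seqInv r3 ++ seqInv c3).prod * 1) = g * h := by
        rw [mul_one, List.prod_append, hpgh]
      exact mul_left_cancel (e1.trans e2.symm)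
    have hkeyh : h = c2.prod * (r2.prod * ((seqInv c3).prod * 1)) := by
      rw [mul_one, ← mul_assoc, hph]
    -- splittings of the ζ-sums
    have sg0 := by
      have := CupTrivAux.Z0_append lam (d1 ψ) (a ++ r1) (seqInv c2) h i
      rw [CupTrivAux.Z0_append lam (d1 ψ) a r1] at this
      exact this
    have sg1 := by
      have := CupTrivAux.Z1_append lam (d1 ψ) (a ++ r1) (seqInv c2) h i
      rw [CupTrivAux.Z1_append lam (d1 ψ) a r1] at this
      exact this
    have sh0 := by
      have := CupTrivAux.Z0_append lam (d1 ψ) (c2 ++ r2) (seqInv c3) (1 : FreeGroup α) i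
      rw [CupTrivAux.Z0_append lam (d1 ψ) c2 r2] at this
      exact this
    have sh1 := by
      have := CupTrivAux.Z1_append lam (d1 ψ) (c2 ++ r2) (seqInv c3) (1 : FreeGroup α) i
      rw [CupTrivAux.Z1_append lam (d1 ψ) c2 r2] at this
      exact this
    have sgh0 := by
      have := CupTrivAux.Z0_append lam (d1 ψ) a (seqInv r3 ++ seqInv c3) (1 : FreeGroup α) i
      rw [CupTrivAux.Z0_append lam (d1 ψ) (seqInv r3) (seqInv c3)] at this
      exact this
    have sgh1 := by
      have := CupTrivAux.Z1_append lam (d1 ψ) a (seqInv r3 ++ seqInv c3) (1 : FreeGroup α) i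
      rw [CupTrivAux.Z1_append lam (d1 ψ) (seqInv r3) (seqInv c3)] at this
      exact this
    -- reversal identities
    have hT0 : CupTrivAux.Z0 lam (d1 ψ) (seqInv c2) h i
        = -(CupTrivAux.Z1 lam (d1 ψ) c2 (r2.prod * ((seqInv c3).prod * 1)) i) := by
      conv_lhs => rw [hkeyh]
      exact CupTrivAux.Z0_seqInv lam (d1 ψ) c2 _ i hsc2
    have hT1 : CupTrivAux.Z1 lam (d1 ψ) (seqInv c2) h i
        = -(CupTrivAux.Z0 lam (d1 ψ) c2 (r2.prod * ((seqInv c3).prod * 1)) i) := by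
      conv_lhs => rw [hkeyh]
      exact CupTrivAux.Z1_seqInv lam (d1 ψ) c2 _ i hsc2
    -- push lemmas
    have pg0 := CupTrivAux.Z0_push lam (d1 ψ) hco (a ++ r1 ++ seqInv c2) h i
    have pg1 := CupTrivAux.Z1_push lam (d1 ψ) hco (a ++ r1 ++ seqInv c2) h i
    have pg0' : CupTrivAux.Z0 lam (d1 ψ) (a ++ r1 ++ seqInv c2) 1 (h * i)
        = CupTrivAux.Z0 lam (d1 ψ) (a ++ r1 ++ seqInv c2) h i
          + CupTrivAux.Z0 lam (d1 ψ) (a ++ r1 ++ seqInv c2) 1 h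
          - (((a ++ r1 ++ seqInv c2)).map lam).sum * d1 ψ h i := by
      linear_combination (-1 : ℝ) * pg0
    have pg1' : CupTrivAux.Z1 lam (d1 ψ) (a ++ r1 ++ seqInv c2) 1 (h * i)
        = CupTrivAux.Z1 lam (d1 ψ) (a ++ r1 ++ seqInv c2) h i
          + CupTrivAux.Z1 lam (d1 ψ) (a ++ r1 ++ seqInv c2) 1 h
          - (((a ++ r1 ++ seqInv c2)).map lam).sum * d1 ψ h i := by
      linear_combination (-1 : ℝ) * pg1
    have hphig : φ g = (((a ++ r1 ++ seqInv c2)).map lam).sum := by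
      rw [hphi]
      show ((dec.D g).map lam).sum = _
      rw [hDg]
    -- the key identity: everything collapses to the bounded r-part sums
    have key_identity :
        φ g * d1 ψ h i
          + d2 (fun u v => CupTrivAux.Z0 lam (d1 ψ) (dec.D u) 1 v) g h i
          - (1/2) * d2 (fun u v => CupTrivAux.Z0 lam (d1 ψ) (dec.D u) 1 v
              - CupTrivAux.Z1 lam (d1 ψ) (dec.D u) 1 v) g h i
        = (CupTrivAux.Z0 lam (d1 ψ) r1 ((seqInv c2).prod * h) i
            + CupTrivAux.Z0 lam (d1 ψ) r2 ((seqInv c3).prod * 1) i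
            - CupTrivAux.Z0 lam (d1 ψ) (seqInv r3) ((seqInv c3).prod * 1) i)
          - (1/2) * ((CupTrivAux.Z0 lam (d1 ψ) r2 ((seqInv c3).prod * 1) i
                - CupTrivAux.Z1 lam (d1 ψ) r2 ((seqInv c3).prod * 1) i)
              - (CupTrivAux.Z0 lam (d1 ψ) (seqInv r3) ((seqInv c3).prod * 1) i
                - CupTrivAux.Z1 lam (d1 ψ) (seqInv r3) ((seqInv c3).prod * 1) i)
              + (CupTrivAux.Z0 lam (d1 ψ) r1 ((seqInv c2).prod * h) i
                - CupTrivAux.Z1 lam (d1 ψ) r1 ((seqInv c2).prod * h) i)) := by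
      simp only [d2]
      rw [hDg, hDh, hDgh, pg0', pg1', sg0, sg1, sh0, sh1, sgh0, sgh1, hT0, hT1, key, hphig]
      ring
    rw [key_identity]
    -- now bound the right-hand side
    have br1 : (r1.length : ℝ) ≤ (dec.R : ℝ) := by exact_mod_cast hl1
    have br2 : (r2.length : ℝ) ≤ (dec.R : ℝ) := by exact_mod_cast hl2
    have br3 : ((seqInv r3).length : ℝ) ≤ (dec.R : ℝ) := by
      rw [CupTrivAux.seqInv_length]; exact_mod_cast hl3
    have b1 : |CupTrivAux.Z0 lam (d1 ψ) r1 ((seqInv c2).prod * h) i| ≤ (dec.R : ℝ) * (B * Dq) :=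
      (CupTrivAux.Z0_bound lam (d1 ψ) r1 _ i B Dq hmem_r1 hΩ).trans
        (mul_le_mul_of_nonneg_right br1 hBD)
    have b2 : |CupTrivAux.Z0 lam (d1 ψ) r2 ((seqInv c3).prod * 1) i| ≤ (dec.R : ℝ) * (B * Dq) :=
      (CupTrivAux.Z0_bound lam (d1 ψ) r2 _ i B Dq hmem_r2 hΩ).trans
        (mul_le_mul_of_nonneg_right br2 hBD)
    have b3 : |CupTrivAux.Z0 lam (d1 ψ) (seqInv r3) ((seqInv c3).prod * 1) i|
        ≤ (dec.R : ℝ) * (B * Dq) :=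
      (CupTrivAux.Z0_bound lam (d1 ψ) (seqInv r3) _ i B Dq hmem_r3 hΩ).trans
        (mul_le_mul_of_nonneg_right br3 hBD)
    have b1' : |CupTrivAux.Z1 lam (d1 ψ) r1 ((seqInv c2).prod * h) i| ≤ (dec.R : ℝ) * (B * Dq) :=
      (CupTrivAux.Z1_bound lam (d1 ψ) r1 _ i B Dq hmem_r1 hΩ).trans
        (mul_le_mul_of_nonneg_right br1 hBD)
    have b2' : |CupTrivAux.Z1 lam (d1 ψ) r2 ((seqInv c3).prod * 1) i| ≤ (dec.R : ℝ) * (B * Dq) :=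
      (CupTrivAux.Z1_bound lam (d1 ψ) r2 _ i B Dq hmem_r2 hΩ).trans
        (mul_le_mul_of_nonneg_right br2 hBD)
    have b3' : |CupTrivAux.Z1 lam (d1 ψ) (seqInv r3) ((seqInv c3).prod * 1) i|
        ≤ (dec.R : ℝ) * (B * Dq) :=
      (CupTrivAux.Z1_bound lam (d1 ψ) (seqInv r3) _ i B Dq hmem_r3 hΩ).trans
        (mul_le_mul_of_nonneg_right br3 hBD)
    have habs1 := abs_le.mp b1
    have habs2 := abs_le.mp b2
    have habs3 := abs_le.mp b3
    have habs1' := abs_le.mp b1'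
    have habs2' := abs_le.mp b2'
    have habs3' := abs_le.mp b3'
    rw [abs_le]
    constructor <;>
      linarith [habs1.1, habs1.2, habs2.1, habs2.2, habs3.1, habs3.2,
        habs1'.1, habs1'.2, habs2'.1, habs2'.2, habs3'.1, habs3'.2]
  · -- exactness
    intro g₁ g₂ g₃ g₄
    have h1 : ∀ η : FreeGroup α → FreeGroup α → ℝ,
        d2 η g₂ g₃ g₄ - d2 η (g₁ * g₂) g₃ g₄ + d2 η g₁ (g₂ * g₃) g₄
          - d2 η g₁ g₂ (g₃ * g₄) + d2 η g₁ g₂ g₃ = 0 := by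
      intro η
      simp only [d2, mul_assoc]
      ring
    have h2 := hco g₂ g₃ g₄
    have hd1 : d1 φ g₁ g₂ = φ g₁ + φ g₂ - φ (g₁ * g₂) := rfl
    simp only [d3]
    rw [hd1]
    linear_combination (φ g₁) * h2
      + h1 (fun u v => CupTrivAux.Z0 lam (d1 ψ) (dec.D u) 1 v)
      - (1/2) * h1 (fun u v => CupTrivAux.Z0 lam (d1 ψ) (dec.D u) 1 v
          - CupTrivAux.Z1 lam (d1 ψ) (dec.D u) 1 v)
end

section
/- Let F be a non-abelian free group, Δ a decomposition of F into pieces P with constant R, and λ : P → ℝ a bounded map with λ(p⁻¹) = −λ(p) for all p ∈ P. Then the Δ-decomposable map φ_{λ,Δ} is a symmetric quasimorphism; in fact φ_{λ,Δ}(g⁻¹) = −φ_{λ,Δ}(g) for all g ∈ F, and |δ¹φ_{λ,Δ}(g,h)| ≤ 3R·‖λ‖_∞ for all g, h ∈ F. Moreover δ¹φ_{λ,Δ}(g,h) depends only on the r-part of the Δ-triangle of (g,h). -/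
section AuxQM
variable {α : Type} [DecidableEq α]

lemma sum_map_seqInv_aux (lam : FreeGroup α → ℝ) (l : List (FreeGroup α))
    (h : ∀ p ∈ l, lam p⁻¹ = -lam p) :
    ((seqInv l).map lam).sum = -(l.map lam).sum := by
  unfold seqInv
  rw [List.map_reverse, List.sum_reverse, List.map_map]
  induction l with
  | nil => simp
  | cons a t ih =>
    simp only [List.map_cons, List.sum_cons, Function.comp_apply]
    rw [h a (by simp), ih (fun p hp => h p (by simp [hp]))]
    ring

lemma abs_sum_map_le_aux (lam : FreeGroup α → ℝ) (B : ℝ) (l : List (FreeGroup α))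
    (h : ∀ p ∈ l, |lam p| ≤ B) :
    |(l.map lam).sum| ≤ (l.length : ℝ) * B := by
  induction l with
  | nil => simp
  | cons a t ih =>
    simp only [List.map_cons, List.sum_cons, List.length_cons]
    calc |lam a + (t.map lam).sum| ≤ |lam a| + |(t.map lam).sum| := abs_add_le _ _
      _ ≤ B + (t.length : ℝ) * B :=
          add_le_add (h a (by simp)) (ih fun p hp => h p (by simp [hp]))
      _ = ((t.length + 1 : ℕ) : ℝ) * B := by push_cast; ring

end AuxQM

/-- Proposition 3.9: `φ_{λ,Δ}` is a symmetric quasimorphism with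
`|δ¹φ_{λ,Δ}(g,h)| ≤ 3R‖λ‖_∞`, and `δ¹φ_{λ,Δ}(g,h)` depends only on the r-part of the
`Δ`-triangle of `(g,h)`. -/
theorem decomposable_is_symmetric_qm {α : Type} [Fintype α] [DecidableEq α]
    (hab : ∃ a b : α, a ≠ b) (dec : Decomp α)
    (lam : FreeGroup α → ℝ) (B : ℝ)
    (hB : ∀ p ∈ dec.pieces, |lam p| ≤ B)
    (hodd : ∀ p ∈ dec.pieces, lam p⁻¹ = -lam p) :
    IsQuasimorphism (decQM dec.D lam) ∧
    IsSymmetricMap (decQM dec.D lam) ∧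
    (∀ g h : FreeGroup α, |d1 (decQM dec.D lam) g h| ≤ 3 * (dec.R : ℝ) * B) ∧
    (∀ g h g' h' : FreeGroup α,
      rSeq1 dec.D g h = rSeq1 dec.D g' h' →
      rSeq2 dec.D g h = rSeq2 dec.D g' h' →
      rSeq3 dec.D g h = rSeq3 dec.D g' h' →
      d1 (decQM dec.D lam) g h = d1 (decQM dec.D lam) g' h') := by
  set φ := decQM dec.D lam with hphi
  -- membership facts
  have memc1 : ∀ g h : FreeGroup α, ∀ p ∈ cSeq1 dec.D g h, p ∈ dec.pieces := by
    intro g h p hp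
    exact dec.mem_pieces g p (by rw [dec.triangle₁ g h]; simp [hp])
  have memc2 : ∀ g h : FreeGroup α, ∀ p ∈ cSeq2 dec.D g h, p ∈ dec.pieces := by
    intro g h p hp
    exact dec.mem_pieces h p (by rw [dec.triangle₂ g h]; simp [hp])
  have memc3 : ∀ g h : FreeGroup α, ∀ p ∈ cSeq3 dec.D g h, p ∈ dec.pieces := by
    intro g h p hp
    exact dec.mem_pieces (h⁻¹ * g⁻¹) p (by rw [dec.triangle₃ g h]; simp [hp])
  have memr1 : ∀ g h : FreeGroup α, ∀ p ∈ rSeq1 dec.D g h, p ∈ dec.pieces := by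
    intro g h p hp
    exact dec.mem_pieces g p (by rw [dec.triangle₁ g h]; simp [hp])
  have memr2 : ∀ g h : FreeGroup α, ∀ p ∈ rSeq2 dec.D g h, p ∈ dec.pieces := by
    intro g h p hp
    exact dec.mem_pieces h p (by rw [dec.triangle₂ g h]; simp [hp])
  have memr3 : ∀ g h : FreeGroup α, ∀ p ∈ rSeq3 dec.D g h, p ∈ dec.pieces := by
    intro g h p hp
    exact dec.mem_pieces (h⁻¹ * g⁻¹) p (by rw [dec.triangle₃ g h]; simp [hp])
  -- symmetry
  have hsymm : IsSymmetricMap φ := by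
    intro g
    show decQM dec.D lam g⁻¹ = -decQM dec.D lam g
    unfold decQM
    rw [dec.inv_eq g]
    exact sum_map_seqInv_aux lam _ (fun p hp => hodd p (dec.mem_pieces g p hp))
  -- the key formula for d1
  have key : ∀ g h : FreeGroup α, d1 φ g h =
      ((rSeq1 dec.D g h).map lam).sum + ((rSeq2 dec.D g h).map lam).sum +
        ((rSeq3 dec.D g h).map lam).sum := by
    intro g h
    have hgh : φ (g * h) = -φ (h⁻¹ * g⁻¹) := by
      have := hsymm (h⁻¹ * g⁻¹)
      rw [mul_inv_rev, inv_inv, inv_inv] at this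
      linarith
    have e1 : φ g = ((cSeq1 dec.D g h).map lam).sum + ((rSeq1 dec.D g h).map lam).sum
        - ((cSeq2 dec.D g h).map lam).sum := by
      show decQM dec.D lam g = _
      unfold decQM
      rw [dec.triangle₁ g h]
      simp only [List.map_append, List.sum_append]
      rw [sum_map_seqInv_aux lam _ (fun p hp => hodd p (memc2 g h p hp))]
      ring
    have e2 : φ h = ((cSeq2 dec.D g h).map lam).sum + ((rSeq2 dec.D g h).map lam).sum
        - ((cSeq3 dec.D g h).map lam).sum := by
      show decQM dec.D lam h = _
      unfold decQM
      rw [dec.triangle₂ g h]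
      simp only [List.map_append, List.sum_append]
      rw [sum_map_seqInv_aux lam _ (fun p hp => hodd p (memc3 g h p hp))]
      ring
    have e3 : φ (h⁻¹ * g⁻¹) = ((cSeq3 dec.D g h).map lam).sum
        + ((rSeq3 dec.D g h).map lam).sum - ((cSeq1 dec.D g h).map lam).sum := by
      show decQM dec.D lam (h⁻¹ * g⁻¹) = _
      unfold decQM
      rw [dec.triangle₃ g h]
      simp only [List.map_append, List.sum_append]
      rw [sum_map_seqInv_aux lam _ (fun p hp => hodd p (memc1 g h p hp))]
      ring
    unfold d1
    rw [hgh, e1, e2, e3]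
    ring
  -- B is nonnegative
  have hB0 : 0 ≤ B := by
    obtain ⟨a, b, hne⟩ := hab
    have hne1 : FreeGroup.of a ≠ 1 := by
      intro hcon
      have : (FreeGroup.of a).toWord = (1 : FreeGroup α).toWord := by rw [hcon]
      simp [FreeGroup.toWord_of, FreeGroup.toWord_one] at this
    have hDne : dec.D (FreeGroup.of a) ≠ [] := by
      intro hcon
      have := dec.prod_eq (FreeGroup.of a)
      rw [hcon] at this
      exact hne1 (by simpa using this.symm)
    obtain ⟨p, hp⟩ := List.exists_mem_of_ne_nil _ hDne
    have := hB p (dec.mem_pieces _ p hp)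
    have := abs_nonneg (lam p)
    linarith
  -- bound
  have bound : ∀ g h : FreeGroup α, |d1 φ g h| ≤ 3 * (dec.R : ℝ) * B := by
    intro g h
    rw [key g h]
    have b1 : |((rSeq1 dec.D g h).map lam).sum| ≤ (dec.R : ℝ) * B := by
      refine le_trans (abs_sum_map_le_aux lam B _ (fun p hp => hB p (memr1 g h p hp))) ?_
      exact mul_le_mul_of_nonneg_right (by exact_mod_cast dec.rBound₁ g h) hB0
    have b2 : |((rSeq2 dec.D g h).map lam).sum| ≤ (dec.R : ℝ) * B := by
      refine le_trans (abs_sum_map_le_aux lam B _ (fun p hp => hB p (memr2 g h p hp))) ?_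
      exact mul_le_mul_of_nonneg_right (by exact_mod_cast dec.rBound₂ g h) hB0
    have b3 : |((rSeq3 dec.D g h).map lam).sum| ≤ (dec.R : ℝ) * B := by
      refine le_trans (abs_sum_map_le_aux lam B _ (fun p hp => hB p (memr3 g h p hp))) ?_
      exact mul_le_mul_of_nonneg_right (by exact_mod_cast dec.rBound₃ g h) hB0
    calc |((rSeq1 dec.D g h).map lam).sum + ((rSeq2 dec.D g h).map lam).sum
          + ((rSeq3 dec.D g h).map lam).sum|
        ≤ |((rSeq1 dec.D g h).map lam).sum| + |((rSeq2 dec.D g h).map lam).sum|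
          + |((rSeq3 dec.D g h).map lam).sum| := abs_add_three _ _ _
      _ ≤ 3 * (dec.R : ℝ) * B := by linarith
  refine ⟨⟨3 * (dec.R : ℝ) * B + 1, by positivity, fun g h => lt_of_le_of_lt (bound g h) (by linarith)⟩,
    hsymm, bound, ?_⟩
  intro g h g' h' h1 h2 h3
  rw [key g h, key g' h', h1, h2, h3]
end

section
/- Let F be a non-abelian free group and Δ a decomposition of F. Every Δ-decomposable quasimorphism φ is Δ-continuous; in fact, δ¹φ(g,h) depends only on the r-part of the Δ-triangle of (g,h), so whenever N_Δ((g,h),(g',h')) ≥ 1 one has δ¹φ(g,h) = δ¹φ(g',h'). -/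
section Aux

variable {α : Type} [DecidableEq α]

lemma mem_commonPrefix {β : Type} [DecidableEq β] {x : β} :
    ∀ {l l' : List β}, x ∈ commonPrefix l l' → x ∈ l
  | a :: as, b :: bs, h => by
      by_cases hab : a = b
      · simp only [commonPrefix, if_pos hab, List.mem_cons] at h
        rcases h with h | h
        · exact h ▸ List.mem_cons_self (a := a) (l := as)
        · exact List.mem_cons_of_mem a (mem_commonPrefix h)
      · simp [commonPrefix, if_neg hab] at h
  | [], _, h => by simp [commonPrefix] at h
  | a :: as, [], h => by simp [commonPrefix] at h

lemma mem_seqInv_of_mem {l : List (FreeGroup α)} {x : FreeGroup α} (h : x ∈ l) :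
    x⁻¹ ∈ seqInv l := by
  simp only [seqInv, List.mem_reverse, List.mem_map]
  exact ⟨x, h, rfl⟩

lemma seqInv_cons (a : FreeGroup α) (l : List (FreeGroup α)) :
    seqInv (a :: l) = seqInv l ++ [a⁻¹] := by
  simp [seqInv]

lemma sum_seqInv (lam : FreeGroup α → ℝ) :
    ∀ (l : List (FreeGroup α)), (∀ x ∈ l, lam x⁻¹ = -lam x) →
      ((seqInv l).map lam).sum = -((l.map lam).sum)
  | [], _ => by simp [seqInv]
  | a :: l, h => by
      rw [seqInv_cons]
      simp only [List.map_append, List.sum_append, List.map_cons, List.sum_cons,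
        List.map_nil, List.sum_nil]
      rw [sum_seqInv lam l (fun x hx => h x (List.mem_cons_of_mem a hx)),
        h a (List.mem_cons_self (a := a) (l := l))]
      ring

lemma abs_sum_le (lam : FreeGroup α → ℝ) (B : ℝ) :
    ∀ (l : List (FreeGroup α)), (∀ x ∈ l, |lam x| ≤ B) →
      |(l.map lam).sum| ≤ B * l.length
  | [], _ => by simp
  | a :: l, h => by
      simp only [List.map_cons, List.sum_cons, List.length_cons]
      calc |lam a + (l.map lam).sum| ≤ |lam a| + |(l.map lam).sum| := abs_add_le _ _
        _ ≤ B + B * l.length := by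
            have := abs_sum_le lam B l (fun x hx => h x (List.mem_cons_of_mem a hx))
            have := h a (List.mem_cons_self (a := a) (l := l))
            linarith
        _ = B * ((l.length : ℝ) + 1) := by ring
        _ = B * ((l.length + 1 : ℕ) : ℝ) := by push_cast; ring

/-- Key computation: the coboundary of a decomposable quasimorphism equals the
sum of `λ` over the three r-parts of the `Δ`-triangle. -/
lemma d1_decQM (dec : Decomp α) (lam : FreeGroup α → ℝ)
    (hodd : ∀ p ∈ dec.pieces, lam p⁻¹ = -lam p) (g h : FreeGroup α) :
    d1 (decQM dec.D lam) g h
      = ((rSeq1 dec.D g h).map lam).sum + ((rSeq2 dec.D g h).map lam).sum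
        + ((rSeq3 dec.D g h).map lam).sum := by
  -- membership helpers
  have hmemDg : ∀ x ∈ dec.D g, x ∈ dec.pieces := dec.mem_pieces g
  have hmemDh : ∀ x ∈ dec.D h, x ∈ dec.pieces := dec.mem_pieces h
  have hmemDk : ∀ x ∈ dec.D (h⁻¹ * g⁻¹), x ∈ dec.pieces := dec.mem_pieces _
  have hc1 : ∀ x ∈ cSeq1 dec.D g h, x ∈ dec.pieces := fun x hx =>
    hmemDg x (mem_commonPrefix (l := dec.D g) (l' := dec.D (g * h)) hx)
  have hc2 : ∀ x ∈ cSeq2 dec.D g h, x ∈ dec.pieces := fun x hx =>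
    dec.mem_pieces g⁻¹ x
      (mem_commonPrefix (l := dec.D g⁻¹) (l' := dec.D h) hx)
  have hc3 : ∀ x ∈ cSeq3 dec.D g h, x ∈ dec.pieces := fun x hx =>
    dec.mem_pieces h⁻¹ x
      (mem_commonPrefix (l := dec.D h⁻¹) (l' := dec.D (h⁻¹ * g⁻¹)) hx)
  have hsumInv : ∀ (l : List (FreeGroup α)), (∀ x ∈ l, x ∈ dec.pieces) →
      ((seqInv l).map lam).sum = -((l.map lam).sum) := fun l hl =>
    sum_seqInv lam l (fun x hx => hodd x (hl x hx))
  have hgh : dec.D (g * h) = seqInv (dec.D (h⁻¹ * g⁻¹)) := by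
    have := dec.inv_eq (h⁻¹ * g⁻¹)
    simpa using this
  have e1 : ((dec.D g).map lam).sum
      = ((cSeq1 dec.D g h).map lam).sum + ((rSeq1 dec.D g h).map lam).sum
        - ((cSeq2 dec.D g h).map lam).sum := by
    rw [dec.triangle₁ g h]
    simp only [List.map_append, List.sum_append]
    rw [hsumInv _ hc2]; ring
  have e2 : ((dec.D h).map lam).sum
      = ((cSeq2 dec.D g h).map lam).sum + ((rSeq2 dec.D g h).map lam).sum
        - ((cSeq3 dec.D g h).map lam).sum := by
    rw [dec.triangle₂ g h]
    simp only [List.map_append, List.sum_append]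
    rw [hsumInv _ hc3]; ring
  have e3 : ((dec.D (g * h)).map lam).sum
      = -(((cSeq3 dec.D g h).map lam).sum + ((rSeq3 dec.D g h).map lam).sum
        - ((cSeq1 dec.D g h).map lam).sum) := by
    rw [hgh, hsumInv _ hmemDk, dec.triangle₃ g h]
    simp only [List.map_append, List.sum_append]
    rw [hsumInv _ hc1]; ring
  simp only [d1, decQM]
  rw [e1, e2, e3]; ring

end Aux

/-- Proposition 3.14 (1): every `Δ`-decomposable quasimorphism is
`Δ`-continuous; in fact `δ¹φ(g,h) = δ¹φ(g',h')` whenever `N_Δ((g,h),(g',h')) ≥ 1`. -/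
theorem decomposable_is_continuous {α : Type} [Fintype α] [DecidableEq α]
    (hab : ∃ a b : α, a ≠ b) (dec : Decomp α)
    (φ : FreeGroup α → ℝ) (hφ : IsDecomposable dec φ) :
    DeltaContinuousQM dec.D φ ∧
    ∀ p q : FreeGroup α × FreeGroup α, 1 ≤ NDelta dec.D p q →
      d1 φ p.1 p.2 = d1 φ q.1 q.2 := by
  obtain ⟨lam, ⟨B, hB⟩, hodd, rfl⟩ := hφ
  set B' : ℝ := max B 0 with hB'def
  have hB'0 : 0 ≤ B' := le_max_right _ _
  have hB' : ∀ p ∈ dec.pieces, |lam p| ≤ B' := fun p hp =>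
    (hB p hp).trans (le_max_left _ _)
  -- the key formula
  have key : ∀ g h : FreeGroup α, d1 (decQM dec.D lam) g h
      = ((rSeq1 dec.D g h).map lam).sum + ((rSeq2 dec.D g h).map lam).sum
        + ((rSeq3 dec.D g h).map lam).sum := d1_decQM dec lam hodd
  -- uniform bound on d1
  have hrmem : ∀ g h : FreeGroup α,
      (∀ x ∈ rSeq1 dec.D g h, x ∈ dec.pieces) ∧
      (∀ x ∈ rSeq2 dec.D g h, x ∈ dec.pieces) ∧
      (∀ x ∈ rSeq3 dec.D g h, x ∈ dec.pieces) := by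
    intro g h
    refine ⟨fun x hx => dec.mem_pieces g x ?_, fun x hx => dec.mem_pieces h x ?_,
      fun x hx => dec.mem_pieces (h⁻¹ * g⁻¹) x ?_⟩
    · rw [dec.triangle₁ g h]; simp only [List.mem_append]; exact Or.inl (Or.inr hx)
    · rw [dec.triangle₂ g h]; simp only [List.mem_append]; exact Or.inl (Or.inr hx)
    · rw [dec.triangle₃ g h]; simp only [List.mem_append]; exact Or.inl (Or.inr hx)
  have habs : ∀ g h : FreeGroup α,
      |d1 (decQM dec.D lam) g h| ≤ 3 * B' * dec.R := by
    intro g h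
    obtain ⟨h1, h2, h3⟩ := hrmem g h
    have b1 := abs_sum_le lam B' _ (fun x hx => hB' x (h1 x hx))
    have b2 := abs_sum_le lam B' _ (fun x hx => hB' x (h2 x hx))
    have b3 := abs_sum_le lam B' _ (fun x hx => hB' x (h3 x hx))
    have l1 : (B' : ℝ) * (rSeq1 dec.D g h).length ≤ B' * dec.R := by
      have := dec.rBound₁ g h
      exact mul_le_mul_of_nonneg_left (by exact_mod_cast this) hB'0
    have l2 : (B' : ℝ) * (rSeq2 dec.D g h).length ≤ B' * dec.R := by
      have := dec.rBound₂ g h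
      exact mul_le_mul_of_nonneg_left (by exact_mod_cast this) hB'0
    have l3 : (B' : ℝ) * (rSeq3 dec.D g h).length ≤ B' * dec.R := by
      have := dec.rBound₃ g h
      exact mul_le_mul_of_nonneg_left (by exact_mod_cast this) hB'0
    rw [key g h]
    calc |((rSeq1 dec.D g h).map lam).sum + ((rSeq2 dec.D g h).map lam).sum
          + ((rSeq3 dec.D g h).map lam).sum|
        ≤ |((rSeq1 dec.D g h).map lam).sum + ((rSeq2 dec.D g h).map lam).sum|
          + |((rSeq3 dec.D g h).map lam).sum| := abs_add_le _ _
      _ ≤ |((rSeq1 dec.D g h).map lam).sum| + |((rSeq2 dec.D g h).map lam).sum|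
          + |((rSeq3 dec.D g h).map lam).sum| := by
            have := abs_add_le (((rSeq1 dec.D g h).map lam).sum)
              (((rSeq2 dec.D g h).map lam).sum)
            linarith
      _ ≤ 3 * B' * dec.R := by linarith
  -- d1 depends only on r-parts
  have req : ∀ p q : FreeGroup α × FreeGroup α,
      rSeq1 dec.D p.1 p.2 = rSeq1 dec.D q.1 q.2 →
      rSeq2 dec.D p.1 p.2 = rSeq2 dec.D q.1 q.2 →
      rSeq3 dec.D p.1 p.2 = rSeq3 dec.D q.1 q.2 →
      d1 (decQM dec.D lam) p.1 p.2 = d1 (decQM dec.D lam) q.1 q.2 := by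
    intro p q e1 e2 e3
    rw [key, key, e1, e2, e3]
  constructor
  · refine ⟨?_, ?_, ?_⟩
    · -- symmetric
      intro g
      have := dec.inv_eq g
      simp only [decQM, this]
      exact sum_seqInv lam (dec.D g) (fun x hx => hodd x (dec.mem_pieces g x hx))
    · -- quasimorphism
      refine ⟨3 * B' * dec.R + 1, by positivity, fun g h => ?_⟩
      have := habs g h
      calc |d1 (decQM dec.D lam) g h| ≤ 3 * B' * dec.R := this
        _ < 3 * B' * dec.R + 1 := by linarith
    · -- Δ-continuity of d1
      refine ⟨fun N => if N = 0 then 6 * B' * dec.R else 0, ?_, ?_, ?_⟩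
      · intro j; dsimp only; split <;> positivity
      · apply summable_of_ne_finset_zero (s := {0})
        intro i hi
        simp only [Finset.mem_singleton] at hi
        simp [hi]
      · intro p q hpq N hN
        by_cases hr : rSeq1 dec.D p.1 p.2 = rSeq1 dec.D q.1 q.2 ∧
            rSeq2 dec.D p.1 p.2 = rSeq2 dec.D q.1 q.2 ∧
            rSeq3 dec.D p.1 p.2 = rSeq3 dec.D q.1 q.2
        · rw [req p q hr.1 hr.2.1 hr.2.2]
          simp only [sub_self, abs_zero]
          split <;> positivity
        · have : NDelta dec.D p q = 0 := by
            rw [NDelta, if_neg hpq, if_neg hr]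
          rw [this] at hN
          have hN0 : N = 0 := by exact_mod_cast hN.symm
          rw [hN0]
          dsimp only
          simp only [if_pos rfl]
          calc |d1 (decQM dec.D lam) p.1 p.2 - d1 (decQM dec.D lam) q.1 q.2|
              ≤ |d1 (decQM dec.D lam) p.1 p.2| + |d1 (decQM dec.D lam) q.1 q.2| :=
                abs_sub _ _
            _ ≤ 3 * B' * dec.R + 3 * B' * dec.R := add_le_add (habs _ _) (habs _ _)
            _ = 6 * B' * dec.R := by ring
  · intro p q hN
    by_cases hpq : p = q
    · rw [hpq]
    by_cases hr : rSeq1 dec.D p.1 p.2 = rSeq1 dec.D q.1 q.2 ∧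
        rSeq2 dec.D p.1 p.2 = rSeq2 dec.D q.1 q.2 ∧
        rSeq3 dec.D p.1 p.2 = rSeq3 dec.D q.1 q.2
    · exact req p q hr.1 hr.2.1 hr.2.2
    · exfalso
      rw [NDelta, if_neg hpq, if_neg hr] at hN
      exact absurd hN (by simp)
end

section
/- Let F be a non-abelian free group and φ_w the Brooks counting quasimorphism on a non self-overlapping word w of word length m. Then for every decomposition Δ of F, whenever N_Δ((g,h),(g',h')) ≥ m one has δ¹φ_w(g,h) = δ¹φ_w(g',h'); consequently φ_w is Δ-continuous for every decomposition Δ. -/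
set_option linter.unusedSectionVars false


open List

namespace BrooksAux

variable {β : Type} [DecidableEq β]

/-- occurrence count of `W` at positions `0..|L|`. -/
def ocl (W L : List β) : ℕ :=
  ((List.range (L.length + 1)).filter
    (fun s => decide ((L.drop s).take W.length = W))).length

lemma ocl_eq_countP (W L : List β) :
    ocl W L = (List.range (L.length + 1)).countP
      (fun s => decide ((L.drop s).take W.length = W)) := by
  rw [ocl, List.countP_eq_length_filter]

lemma ocl_le (W L : List β) : ocl W L ≤ L.length + 1 := by
  rw [ocl]
  calc _ ≤ (List.range (L.length + 1)).length := (List.length_filter_le _ _)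
  _ = L.length + 1 := by simp

lemma occ_imp {W L : List β} (hn : 1 ≤ W.length) {s : ℕ} (h : (L.drop s).take W.length = W) :
    s + W.length ≤ L.length := by
  have h2 := congrArg List.length h
  rw [List.length_take, List.length_drop] at h2
  omega

lemma ocl_of_short {W L : List β} (h : L.length < W.length) : ocl W L = 0 := by
  rw [ocl_eq_countP, List.countP_eq_zero]
  intro s _hs
  simp only [decide_eq_true_eq]
  intro hocc
  have := occ_imp (by omega) hocc
  omega

/-- The splitting lemma: occurrences in `U ++ V` are occurrences in `U`, in `V`,
    plus occurrences in the junction window. -/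
lemma ocl_append (W U V : List β) (hn : 1 ≤ W.length) :
    ocl W (U ++ V)
      = ocl W U + ocl W V + ocl W (U.drop (U.length - (W.length - 1)) ++ V.take (W.length - 1)) := by
  set n := W.length with hnn
  set k := n - 1 with hk
  set r := min k U.length with hr
  set q := U.length - r with hq
  set Uk := U.drop q with hUk
  set Vk := V.take k with hVk
  have hUklen : Uk.length = r := by simp [hUk, hq]; omega
  have hVklen : Vk.length = min k V.length := by simp [hVk]
  have hql : q = U.length - k := by omega
  -- main sum
  rw [ocl_eq_countP]
  have hlen : (U ++ V).length + 1 = U.length + (V.length + 1) := by simp; omega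
  rw [hlen, List.range_add, List.countP_append, List.countP_map]
  -- second chunk = ocl W V
  have h2 : ((List.range (V.length + 1)).countP
      ((fun s => decide (((U ++ V).drop s).take n = W)) ∘ (fun x => U.length + x)))
      = ocl W V := by
    rw [ocl_eq_countP]
    apply List.countP_congr
    intro s _hs
    simp only [Function.comp_apply, decide_eq_true_eq]
    rw [List.drop_append]
    have h1 : U.length + s - U.length = s := by omega
    have h0 : U.drop (U.length + s) = [] := by
      apply List.drop_eq_nil_of_le; omega
    rw [h0, h1, List.nil_append]
  rw [h2]
  -- first chunk
  have hsplit : U.length = q + r := by omega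
  rw [hsplit, List.range_add, List.countP_append, List.countP_map]
  -- chunk (a): = ocl W U
  have ha : ((List.range q).countP (fun s => decide (((U ++ V).drop s).take n = W)))
      = ocl W U := by
    rw [ocl_eq_countP]
    have h3 : U.length + 1 = q + (r + 1) := by omega
    rw [h3, List.range_add, List.countP_append, List.countP_map]
    have h4 : ((List.range (r+1)).countP
        ((fun s => decide ((U.drop s).take n = W)) ∘ (fun x => q + x))) = 0 := by
      rw [List.countP_eq_zero]
      intro j hj
      simp only [Function.comp_apply, decide_eq_true_eq]
      intro hocc
      have := occ_imp hn hocc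
      simp at hj
      omega
    rw [h4, Nat.add_zero]
    apply List.countP_congr
    intro s hs
    simp only [decide_eq_true_eq]
    simp at hs
    have hsk : s + n ≤ U.length := by omega
    rw [List.drop_append]
    have h0 : s - U.length = 0 := by omega
    rw [h0, List.drop_zero, List.take_append]
    have h5 : n - (U.drop s).length = 0 := by
      simp [List.length_drop]; omega
    rw [h5, List.take_zero, List.append_nil]
  rw [ha]
  -- chunk (b): = ocl W (Uk ++ Vk)
  have hb : ((List.range r).countP
      ((fun s => decide (((U ++ V).drop s).take n = W)) ∘ (fun x => q + x)))
      = ocl W (Uk ++ Vk) := by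
    rw [ocl_eq_countP]
    have h6 : (Uk ++ Vk).length + 1 = r + (Vk.length + 1) := by simp [hUklen]; omega
    rw [h6, List.range_add, List.countP_append, List.countP_map]
    have h7 : ((List.range (Vk.length + 1)).countP
        ((fun s => decide (((Uk ++ Vk).drop s).take n = W)) ∘ (fun x => r + x))) = 0 := by
      rw [List.countP_eq_zero]
      intro j hj
      simp only [Function.comp_apply, decide_eq_true_eq]
      intro hocc
      have := occ_imp hn hocc
      simp [hUklen, hVklen] at this
      omega
    rw [h7, Nat.add_zero]
    symm
    apply List.countP_congr
    intro j hj
    simp at hj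
    simp only [Function.comp_apply, decide_eq_true_eq]
    have hd1 : (U ++ V).drop (q + j) = Uk.drop j ++ V := by
      rw [List.drop_append]
      have : q + j - U.length = 0 := by omega
      rw [this, List.drop_zero, hUk, List.drop_drop]
    have hd2 : (Uk ++ Vk).drop j = Uk.drop j ++ Vk := by
      rw [List.drop_append]
      have : j - Uk.length = 0 := by omega
      rw [this, List.drop_zero]
    rw [hd1, hd2, List.take_append, List.take_append]
    have hlen2 : (Uk.drop j).length = r - j := by simp [hUklen]
    have h8 : n - (Uk.drop j).length ≤ k := by omega
    rw [hVk, List.take_take]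
    have h9 : min (n - (Uk.drop j).length) k = n - (Uk.drop j).length := by omega
    rw [h9]
  rw [hb]
  have hqq : q + r - k = q := by omega
  rw [hqq, ← hUk]
  omega

end BrooksAux

namespace BrooksAux2

open FreeGroup BrooksAux

variable {γ : Type} [DecidableEq γ]

lemma invRev_append (X Y : List (γ × Bool)) :
    invRev (X ++ Y) = invRev Y ++ invRev X := by
  simp [FreeGroup.invRev]

lemma invRev_drop (L : List (γ × Bool)) (t : ℕ) :
    (invRev L).drop t = invRev (L.take (L.length - t)) := by
  rw [FreeGroup.invRev, FreeGroup.invRev, List.map_take, List.reverse_take, List.length_map]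
  by_cases ht : t ≤ L.length
  · congr 1
    omega
  · rw [List.drop_eq_nil_of_le (by simp; omega), List.drop_eq_nil_of_le (by simp; omega)]

lemma invRev_take (L : List (γ × Bool)) (t : ℕ) :
    (invRev L).take t = invRev (L.drop (L.length - t)) := by
  rw [FreeGroup.invRev, FreeGroup.invRev, List.map_drop, List.reverse_drop, List.length_map]
  by_cases ht : t ≤ L.length
  · congr 1
    omega
  · rw [List.take_of_length_le (by simp; omega), List.take_of_length_le (by simp; omega)]

lemma invRev_window (c : List (γ × Bool)) (k : ℕ) :
    (invRev c).drop ((invRev c).length - k) = invRev (c.take k) := by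
  rw [invRev_length, invRev_drop]
  by_cases h : k ≤ c.length
  · have : c.length - (c.length - k) = k := by omega
    rw [this]
  · have : c.length - (c.length - k) = c.length := by omega
    rw [this, List.take_length, List.take_of_length_le (by omega)]

/-- Reversal: occurrences of `invRev W` in `invRev L` = occurrences of `W` in `L`. -/
lemma ocl_invRev (W L : List (γ × Bool)) : ocl (invRev W) (invRev L) = ocl W L := by
  by_cases hn0 : W.length = 0
  · rw [List.length_eq_zero_iff] at hn0
    subst hn0
    rw [invRev_empty]
    rw [ocl_eq_countP, ocl_eq_countP]
    simp
  set n := W.length with hnn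
  have hn : 1 ≤ n := by omega
  set N := L.length with hN
  have hWn : (invRev W).length = n := invRev_length
  have hLN : (invRev L).length = N := invRev_length
  rw [ocl_eq_countP, hLN, hWn]
  -- reflect the range
  have hrefl : (List.range (N+1)).countP (fun s => decide (((invRev L).drop s).take n = invRev W))
      = (List.range (N+1)).countP
          (fun s => decide ((L.take s).drop (s - n) = W)) := by
    rw [← List.countP_reverse, List.range_eq_range', List.reverse_range', ← List.range_eq_range',
       List.countP_map]
    apply List.countP_congr
    intro s hs
    simp only [List.mem_range] at hs
    simp only [Function.comp_apply, decide_eq_true_eq]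
    have h0 : 0 + (N + 1) - 1 - s = N - s := by omega
    rw [h0, invRev_drop]
    have h1 : L.length - (N - s) = s := by omega
    rw [h1, invRev_take, List.length_take]
    have h2 : min s L.length = s := by omega
    rw [h2, FreeGroup.invRev_injective.eq_iff]
  rw [hrefl, ocl_eq_countP, ← hN, ← hnn]
  by_cases hcase : n ≤ N
  · have L1 : (List.range (N+1)).countP (fun s => decide ((L.take s).drop (s - n) = W))
        = (List.range (N+1-n)).countP
            ((fun s => decide ((L.take s).drop (s - n) = W)) ∘ (fun x => n + x)) := by
      rw [show N + 1 = n + (N + 1 - n) by omega, List.range_add, List.countP_append,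
        List.countP_map]
      have e1 : (List.range n).countP (fun s => decide ((L.take s).drop (s - n) = W)) = 0 := by
        rw [List.countP_eq_zero]
        intro s hs
        simp only [List.mem_range] at hs
        simp only [decide_eq_true_eq]
        intro h
        have := congrArg List.length h
        rw [List.length_drop, List.length_take] at this
        omega
      rw [e1, Nat.zero_add]
      have : n + (N + 1 - n) - n = N + 1 - n := by omega
      rw [this]
    have R1 : (List.range (N+1)).countP (fun s => decide ((L.drop s).take n = W))
        = (List.range (N+1-n)).countP (fun s => decide ((L.drop s).take n = W)) := by
      rw [show N + 1 = (N + 1 - n) + n by omega, List.range_add, List.countP_append,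
        List.countP_map]
      have e2 : (List.range n).countP
          ((fun s => decide ((L.drop s).take n = W)) ∘ (fun x => N + 1 - n + x)) = 0 := by
        rw [List.countP_eq_zero]
        intro j hj
        simp only [List.mem_range] at hj
        simp only [Function.comp_apply, decide_eq_true_eq]
        intro h
        have := occ_imp hn h
        omega
      rw [e2, Nat.add_zero]
      have : N + 1 - n + n - n = N + 1 - n := by omega
      rw [this]
    rw [L1, R1]
    apply List.countP_congr
    intro t ht
    simp only [List.mem_range] at ht
    simp only [Function.comp_apply, decide_eq_true_eq]
    rw [List.drop_take, show n + t - n = t by omega, show n + t - t = n by omega]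
  · rw [List.countP_eq_zero.2, List.countP_eq_zero.2]
    · intro s hs
      simp only [List.mem_range] at hs
      simp only [decide_eq_true_eq]
      intro h
      have := occ_imp hn h
      omega
    · intro s hs
      simp only [List.mem_range] at hs
      simp only [decide_eq_true_eq]
      intro h
      have := congrArg List.length h
      rw [List.length_drop, List.length_take] at this
      omega

end BrooksAux2

namespace BrooksB

open FreeGroup List

variable {α : Type} [DecidableEq α]

/-- reduced word predicate -/
def Rd (L : List (α × Bool)) : Prop :=
  L.Chain' (fun a b => ¬(a.1 = b.1 ∧ a.2 = !b.2))

lemma reduce_eq_self_of {L : List (α × Bool)} (h : Rd L) : FreeGroup.reduce L = L := by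
  induction L with
  | nil => rfl
  | cons a t ih =>
    have hc : Rd t := (List.isChain_cons.1 h).2
    rw [FreeGroup.reduce.cons, ih hc]
    cases t with
    | nil => rfl
    | cons b t' =>
      have hab : ¬(a.1 = b.1 ∧ a.2 = !b.2) := (List.isChain_cons.1 h).1 b rfl
      simp only [if_neg hab]

lemma rd_of_reduce {L : List (α × Bool)} (h : FreeGroup.reduce L = L) : Rd L := by
  induction L with
  | nil => exact List.isChain_nil
  | cons a t ih =>
    rw [FreeGroup.reduce.cons] at h
    cases ht : FreeGroup.reduce t with
    | nil =>
      rw [ht] at h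
      simp only at h
      injection h with h1 h2
      rw [← h2]
      simp [Rd, List.Chain']
    | cons b t₂ =>
      rw [ht] at h
      simp only at h
      by_cases hcond : a.1 = b.1 ∧ a.2 = !b.2
      · rw [if_pos hcond] at h
        have hlt : (FreeGroup.reduce t).length ≤ t.length :=
          FreeGroup.Red.length_le (FreeGroup.reduce.red)
        have h1 := congrArg List.length h
        rw [ht] at hlt
        simp at h1 hlt
        omega
      · rw [if_neg hcond] at h
        have htt : t = b :: t₂ := by
          injection h with h1 h2
          exact h2.symm
        have hred : FreeGroup.reduce t = t := by rw [ht, htt]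
        have := ih hred
        rw [htt]
        exact List.isChain_cons_cons.2 ⟨hcond, htt ▸ this⟩

lemma rd_toWord (x : FreeGroup α) : Rd x.toWord :=
  rd_of_reduce (FreeGroup.reduce_toWord x)

lemma toWord_mk_of_rd {L : List (α × Bool)} (h : Rd L) : (FreeGroup.mk L).toWord = L := by
  rw [FreeGroup.toWord_mk, reduce_eq_self_of h]

/-- no-cancellation multiplication -/
lemma toWord_mul_of_len {a b : FreeGroup α}
    (h : (a * b).toWord.length = a.toWord.length + b.toWord.length) :
    (a * b).toWord = a.toWord ++ b.toWord := by
  have hm : a * b = FreeGroup.mk (a.toWord ++ b.toWord) := by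
    rw [← FreeGroup.mul_mk, FreeGroup.mk_toWord, FreeGroup.mk_toWord]
  have hW : (a * b).toWord = FreeGroup.reduce (a.toWord ++ b.toWord) := by
    rw [hm, FreeGroup.toWord_mk]
  have hsub : FreeGroup.reduce (a.toWord ++ b.toWord) <+ (a.toWord ++ b.toWord) :=
    (FreeGroup.reduce.red).sublist
  rw [hW]
  apply hsub.eq_of_length
  rw [← hW, List.length_append]
  exact h

lemma wlen_prod_le (l : List (FreeGroup α)) : wlen l.prod ≤ (l.map wlen).sum := by
  induction l with
  | nil => simp [wlen]
  | cons a t ih =>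
    rw [List.prod_cons, List.map_cons, List.sum_cons]
    calc wlen (a * t.prod) ≤ wlen a + wlen t.prod := FreeGroup.norm_mul_le a t.prod
    _ ≤ wlen a + (t.map wlen).sum := by omega

lemma reducedProd_cons {a : FreeGroup α} {t : List (FreeGroup α)}
    (h : ReducedProd (a :: t)) :
    ReducedProd t ∧ (a * t.prod).toWord = a.toWord ++ t.prod.toWord := by
  have h1 : wlen (a * t.prod) ≤ wlen a + wlen t.prod := FreeGroup.norm_mul_le a t.prod
  have h2 : wlen t.prod ≤ (t.map wlen).sum := wlen_prod_le t
  rw [ReducedProd, List.prod_cons, List.map_cons, List.sum_cons] at h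
  have h3 : wlen t.prod = (t.map wlen).sum := by omega
  have h4 : wlen (a * t.prod) = wlen a + wlen t.prod := by omega
  exact ⟨h3, toWord_mul_of_len h4⟩

lemma prod_toWord {l : List (FreeGroup α)} (h : ReducedProd l) :
    l.prod.toWord = (l.map FreeGroup.toWord).flatten := by
  induction l with
  | nil => simp [FreeGroup.toWord_one]
  | cons a t ih =>
    obtain ⟨ht, hw⟩ := reducedProd_cons h
    rw [List.prod_cons, hw, ih ht, List.map_cons, List.flatten_cons]

lemma seqInv_prod (l : List (FreeGroup α)) : (seqInv l).prod = l.prod⁻¹ := by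
  induction l with
  | nil => simp [seqInv]
  | cons a t ih =>
    have : seqInv (a :: t) = seqInv t ++ [a⁻¹] := by simp [seqInv]
    rw [this, List.prod_append, ih]
    simp [List.prod_cons, mul_inv_rev]

lemma seqInv_join (l : List (FreeGroup α)) :
    ((seqInv l).map FreeGroup.toWord).flatten
      = FreeGroup.invRev ((l.map FreeGroup.toWord).flatten) := by
  induction l with
  | nil => simp [seqInv, FreeGroup.invRev]
  | cons a t ih =>
    have : seqInv (a :: t) = seqInv t ++ [a⁻¹] := by simp [seqInv]
    simp only [this, List.map_append, List.flatten_append, ih, List.map_cons, List.map_nil,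
      List.flatten_cons, List.flatten_nil, List.append_nil, BrooksAux2.invRev_append,
      FreeGroup.toWord_inv]

lemma seqInv_seqInv (l : List (FreeGroup α)) : seqInv (seqInv l) = l := by
  simp [seqInv, List.map_reverse, Function.comp]

/-- Tripod lemma -/
lemma tripod (g h : FreeGroup α) :
    ∃ A c B : List (α × Bool),
      g.toWord = A ++ c ∧ h.toWord = FreeGroup.invRev c ++ B ∧ (g * h).toWord = A ++ B := by
  suffices H : ∀ (n : ℕ) (g h : FreeGroup α), g.toWord.length ≤ n →
      ∃ A c B : List (α × Bool),
        g.toWord = A ++ c ∧ h.toWord = FreeGroup.invRev c ++ B ∧ (g * h).toWord = A ++ B by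
    exact H g.toWord.length g h le_rfl
  intro n
  induction n with
  | zero =>
    intro g h hg
    have : g = 1 := by
      rw [← FreeGroup.toWord_eq_nil_iff, ← List.length_eq_zero_iff]
      omega
    subst this
    exact ⟨[], [], h.toWord, by simp [FreeGroup.toWord_one],
      by simp [FreeGroup.invRev_empty], by simp⟩
  | succ n ih =>
    intro g h hg
    rcases List.eq_nil_or_concat g.toWord with hgnil | ⟨T₀, x, hT⟩
    · have : g = 1 := FreeGroup.toWord_eq_nil_iff.1 hgnil
      subst this
      exact ⟨[], [], h.toWord, by simp [FreeGroup.toWord_one],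
        by simp [FreeGroup.invRev_empty], by simp⟩
    · rw [List.concat_eq_append] at hT
      cases hh : h.toWord with
      | nil =>
        have : h = 1 := FreeGroup.toWord_eq_nil_iff.1 hh
        subst this
        exact ⟨g.toWord, [], [], by simp, by simp [FreeGroup.invRev_empty], by simp⟩
      | cons y H₀ =>
        by_cases hxy : y = (x.1, !x.2)
        · -- cancellation
          have hrdg : Rd g.toWord := rd_toWord g
          have hrdh : Rd h.toWord := rd_toWord h
          rw [hT] at hrdg
          rw [hh] at hrdh
          have hrdT₀ : Rd T₀ := (List.isChain_append.1 hrdg).1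
          have hrdH₀ : Rd H₀ := (List.isChain_cons.1 hrdh).2
          have hg₀ : (FreeGroup.mk T₀).toWord = T₀ := toWord_mk_of_rd hrdT₀
          have hh₀ : (FreeGroup.mk H₀).toWord = H₀ := toWord_mk_of_rd hrdH₀
          have hgg : g = FreeGroup.mk T₀ * FreeGroup.mk [x] := by
            rw [FreeGroup.mul_mk, ← hT, FreeGroup.mk_toWord]
          have hhh : h = FreeGroup.mk [y] * FreeGroup.mk H₀ := by
            rw [FreeGroup.mul_mk, List.singleton_append, ← hh, FreeGroup.mk_toWord]
          have hcancel : FreeGroup.mk [x] * FreeGroup.mk [y] = (1 : FreeGroup α) := by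
            rw [FreeGroup.mul_mk, hxy]
            have hstep : FreeGroup.Red.Step ((x.1, x.2) :: (x.1, !x.2) :: ([] : List (α × Bool)))
                [] := FreeGroup.Red.Step.cons_not
            have hq : FreeGroup.mk ((x.1, x.2) :: (x.1, !x.2) :: ([] : List (α × Bool)))
                = FreeGroup.mk [] := by
              rw [← FreeGroup.quot_mk_eq_mk, ← FreeGroup.quot_mk_eq_mk]
              exact Quot.sound hstep
            have hlist : ([x] ++ [(x.1, !x.2)] : List (α × Bool))
                = (x.1, x.2) :: (x.1, !x.2) :: [] := by simp
            rw [hlist, hq, ← FreeGroup.one_eq_mk]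
          have hgh : g * h = FreeGroup.mk T₀ * FreeGroup.mk H₀ := by
            rw [hgg, hhh, mul_assoc, ← mul_assoc (FreeGroup.mk [x]), hcancel, one_mul]
          have hlen : (FreeGroup.mk T₀).toWord.length ≤ n := by
            rw [hg₀]
            have := congrArg List.length hT
            simp at this
            omega
          obtain ⟨A, c, B, hA, hB, hAB⟩ := ih (FreeGroup.mk T₀) (FreeGroup.mk H₀) hlen
          refine ⟨A, c ++ [x], B, ?_, ?_, ?_⟩
          · have hA' : T₀ = A ++ c := by rw [← hg₀]; exact hA
            rw [hT, hA', List.append_assoc]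
          · have hB' : H₀ = FreeGroup.invRev c ++ B := by rw [← hh₀]; exact hB
            have hix : FreeGroup.invRev [x] = [y] := by
              simp [FreeGroup.invRev, hxy]
            rw [BrooksAux2.invRev_append, hix, hB']
            simp
          · rw [hgh, hAB]
        · -- no cancellation
          refine ⟨g.toWord, [], h.toWord, by simp,
            by rw [FreeGroup.invRev_empty, List.nil_append, hh], ?_⟩
          have hm : g * h = FreeGroup.mk (g.toWord ++ h.toWord) := by
            rw [← FreeGroup.mul_mk, FreeGroup.mk_toWord, FreeGroup.mk_toWord]
          rw [hm]
          apply toWord_mk_of_rd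
          refine List.isChain_append.2 ⟨rd_toWord g, rd_toWord h, ?_⟩
          intro u hu v hv
          rw [hT] at hu
          rw [hh] at hv
          simp [List.getLast?_append] at hu
          simp at hv
          subst hu hv
          rintro ⟨h1, h2⟩
          apply hxy
          ext
          · exact h1.symm
          · simp [h2]
end BrooksB



namespace BrooksC

open FreeGroup List BrooksAux BrooksAux2 BrooksB

variable {α : Type} [DecidableEq α]

lemma occCount_eq_ocl (w g : FreeGroup α) : occCount w g = ocl w.toWord g.toWord := rfl

/-- the junction contribution -/
noncomputable def Fw (W Ak ck Bk : List (α × Bool)) : ℤ :=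
  (ocl W (Ak ++ ck) : ℤ) + (ocl W (FreeGroup.invRev ck ++ Bk) : ℤ) - (ocl W (Ak ++ Bk) : ℤ)

noncomputable def Phi (W Ak ck Bk : List (α × Bool)) : ℤ :=
  Fw W Ak ck Bk - Fw (FreeGroup.invRev W) Ak ck Bk

lemma d1_formula (w g h : FreeGroup α) (hw1 : 1 ≤ w.toWord.length)
    {A c B : List (α × Bool)}
    (hA : g.toWord = A ++ c) (hB : h.toWord = FreeGroup.invRev c ++ B)
    (hAB : (g * h).toWord = A ++ B) :
    d1 (brooksQM w) g h
      = ((Phi w.toWord (A.drop (A.length - (w.toWord.length - 1)))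
          (c.take (w.toWord.length - 1)) (B.take (w.toWord.length - 1)) : ℤ) : ℝ) := by
  set W := w.toWord with hW
  set k := W.length - 1 with hk
  have hWi : (w⁻¹).toWord = FreeGroup.invRev W := FreeGroup.toWord_inv w
  have hWil : (FreeGroup.invRev W).length = W.length := FreeGroup.invRev_length
  set Ak := A.drop (A.length - k) with hAk
  set ck := c.take k with hck
  set Bk := B.take k with hBk
  -- six splittings
  have e1 : ocl W (A ++ c) = ocl W A + ocl W c + ocl W (Ak ++ ck) := ocl_append W A c hw1
  have e2 : ocl W (FreeGroup.invRev c ++ B)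
      = ocl W (FreeGroup.invRev c) + ocl W B + ocl W (FreeGroup.invRev ck ++ Bk) := by
    have := ocl_append W (FreeGroup.invRev c) B hw1
    rwa [invRev_window c k] at this
  have e3 : ocl W (A ++ B) = ocl W A + ocl W B + ocl W (Ak ++ Bk) := ocl_append W A B hw1
  have f1 : ocl (FreeGroup.invRev W) (A ++ c)
      = ocl (FreeGroup.invRev W) A + ocl (FreeGroup.invRev W) c
        + ocl (FreeGroup.invRev W) (Ak ++ ck) := by
    have := ocl_append (FreeGroup.invRev W) A c (by omega)
    rwa [hWil] at this
  have f2 : ocl (FreeGroup.invRev W) (FreeGroup.invRev c ++ B)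
      = ocl (FreeGroup.invRev W) (FreeGroup.invRev c) + ocl (FreeGroup.invRev W) B
        + ocl (FreeGroup.invRev W) (FreeGroup.invRev ck ++ Bk) := by
    have := ocl_append (FreeGroup.invRev W) (FreeGroup.invRev c) B (by omega)
    rwa [hWil, invRev_window c k] at this
  have f3 : ocl (FreeGroup.invRev W) (A ++ B)
      = ocl (FreeGroup.invRev W) A + ocl (FreeGroup.invRev W) B
        + ocl (FreeGroup.invRev W) (Ak ++ Bk) := by
    have := ocl_append (FreeGroup.invRev W) A B (by omega)
    rwa [hWil] at this
  -- reversal cancellations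
  have r1 : ocl (FreeGroup.invRev W) (FreeGroup.invRev c) = ocl W c := ocl_invRev W c
  have r2 : ocl (FreeGroup.invRev W) c = ocl W (FreeGroup.invRev c) := by
    have := ocl_invRev W (FreeGroup.invRev c)
    rwa [FreeGroup.invRev_invRev] at this
  rw [d1, brooksQM, brooksQM, brooksQM]
  rw [occCount_eq_ocl, occCount_eq_ocl, occCount_eq_ocl, occCount_eq_ocl, occCount_eq_ocl,
    occCount_eq_ocl, hWi, hA, hB, hAB, ← hW]
  rw [e1, e2, e3, f1, f2, f3, r1, r2]
  rw [Phi, Fw, Fw]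
  push_cast
  ring

lemma brooks_symm (w : FreeGroup α) : IsSymmetricMap (brooksQM w) := by
  intro g
  have h1 : occCount w g⁻¹ = occCount w⁻¹ g := by
    rw [occCount_eq_ocl, occCount_eq_ocl, FreeGroup.toWord_inv, FreeGroup.toWord_inv]
    have := ocl_invRev (FreeGroup.invRev w.toWord) g.toWord
    rwa [FreeGroup.invRev_invRev] at this
  have h2 : occCount w⁻¹ g⁻¹ = occCount w g := by
    rw [occCount_eq_ocl, occCount_eq_ocl, FreeGroup.toWord_inv, FreeGroup.toWord_inv]
    exact ocl_invRev w.toWord g.toWord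
  rw [brooksQM, brooksQM, h1, h2]
  ring

lemma abs_d1_le (w : FreeGroup α) (g h : FreeGroup α) :
    |d1 (brooksQM w) g h| ≤ (6 * (2 * w.toWord.length + 1) : ℝ) := by
  by_cases hw1 : 1 ≤ w.toWord.length
  · obtain ⟨A, c, B, hA, hB, hAB⟩ := tripod g h
    rw [d1_formula w g h hw1 hA hB hAB]
    set k := w.toWord.length - 1 with hk
    set Ak := A.drop (A.length - k)
    set ck := c.take k
    set Bk := B.take k
    have lAk : Ak.length ≤ k := by simp [Ak]; omega
    have lck : ck.length ≤ k := by simp [ck]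
    have lBk : Bk.length ≤ k := by simp [Bk]
    have key : ∀ (V : List (α × Bool)) (X Y : List (α × Bool)),
        X.length ≤ k → Y.length ≤ k → (ocl V (X ++ Y) : ℝ) ≤ 2 * k + 1 := by
      intro V X Y hX hY
      have := ocl_le V (X ++ Y)
      have hlen : (X ++ Y).length ≤ 2 * k := by simp; omega
      have : ocl V (X ++ Y) ≤ 2 * k + 1 := by omega
      exact_mod_cast this
    have habs : ∀ (V : List (α × Bool)), |(Fw V Ak ck Bk : ℝ)| ≤ 3 * (2 * k + 1) := by
      intro V
      rw [Fw]
      push_cast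
      have b1 := key V Ak ck lAk lck
      have b2 := key V (FreeGroup.invRev ck) Bk (by rw [FreeGroup.invRev_length]; exact lck) lBk
      have b3 := key V Ak Bk lAk lBk
      have n1 : (0:ℝ) ≤ (ocl V (Ak ++ ck) : ℝ) := by positivity
      have n2 : (0:ℝ) ≤ (ocl V (FreeGroup.invRev ck ++ Bk) : ℝ) := by positivity
      have n3 : (0:ℝ) ≤ (ocl V (Ak ++ Bk) : ℝ) := by positivity
      rw [abs_le]
      constructor <;> nlinarith
    have := habs w.toWord
    have h2 := habs (FreeGroup.invRev w.toWord)
    rw [Phi]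
    push_cast
    have hkk : (k : ℝ) ≤ w.toWord.length := by exact_mod_cast Nat.sub_le _ _
    calc |((Fw w.toWord Ak ck Bk : ℝ)) - (Fw (FreeGroup.invRev w.toWord) Ak ck Bk : ℝ)|
        ≤ |(Fw w.toWord Ak ck Bk : ℝ)| + |(Fw (FreeGroup.invRev w.toWord) Ak ck Bk : ℝ)| :=
          abs_sub _ _
      _ ≤ 3 * (2 * k + 1) + 3 * (2 * k + 1) := by linarith
      _ ≤ 6 * (2 * w.toWord.length + 1) := by push_cast; nlinarith
  · have hw0 : w.toWord.length = 0 := by omega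
    have : w = 1 := by
      rw [← FreeGroup.toWord_eq_nil_iff, ← List.length_eq_zero_iff]
      exact hw0
    subst this
    have h1 : brooksQM (1 : FreeGroup α) = fun _ => 0 := by
      funext x
      rw [brooksQM, inv_one, sub_self]
    rw [d1, h1]
    norm_num

end BrooksC

namespace BrooksC2

open FreeGroup List BrooksAux BrooksAux2 BrooksB BrooksC

variable {α : Type} [DecidableEq α]

/-- word of a product sequence -/
def pw (l : List (FreeGroup α)) : List (α × Bool) := (l.map FreeGroup.toWord).flatten

lemma pw_append (l l' : List (FreeGroup α)) : pw (l ++ l') = pw l ++ pw l' := by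
  simp [pw]

lemma pw_eq (dec : Decomp α) (x : FreeGroup α) : x.toWord = pw (dec.D x) := by
  conv_lhs => rw [← dec.prod_eq x]
  exact prod_toWord (dec.reduced x)

lemma mid_word (dec : Decomp α) (x : FreeGroup α) (l1 l2 l3 : List (FreeGroup α))
    (htri : dec.D x = l1 ++ l2 ++ l3) : (l2.prod).toWord = pw l2 := by
  have h2 : dec.D l2.prod = l2 := dec.infix_closed x l1 l2 l3 htri
  have hrp : ReducedProd l2 := by
    have := dec.reduced l2.prod
    rwa [h2] at this
  exact prod_toWord hrp

lemma prod3 (l1 l2 l3 : List (FreeGroup α)) :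
    (l1 ++ l2 ++ l3).prod = l1.prod * l2.prod * l3.prod := by
  rw [List.prod_append, List.prod_append]

lemma seqInv_length (l : List (FreeGroup α)) : (seqInv l).length = l.length := by
  simp [seqInv]

lemma seqInv_take (l : List (FreeGroup α)) (m : ℕ) :
    (seqInv l).take m = seqInv (l.drop (l.length - m)) := by
  rw [seqInv, seqInv, List.map_drop, List.reverse_drop, List.length_map]
  by_cases ht : m ≤ l.length
  · congr 1
    omega
  · rw [List.take_of_length_le (by simp; omega), List.take_of_length_le (by simp; omega)]

lemma seqInv_inj {l l' : List (FreeGroup α)} (h : seqInv l = seqInv l') : l = l' := by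
  have := congrArg seqInv h
  rwa [seqInv_seqInv, seqInv_seqInv] at this

lemma commonPrefix_prefix_left {β : Type} [DecidableEq β] :
    ∀ (l l' : List β), commonPrefix l l' <+: l := by
  intro l
  induction l with
  | nil => intro l'; cases l' <;> simp [commonPrefix]
  | cons a as ih =>
    intro l'
    cases l' with
    | nil => simp [commonPrefix]
    | cons b bs =>
      by_cases hab : a = b
      · subst hab
        obtain ⟨t, ht⟩ := ih bs
        exact ⟨t, by simp [commonPrefix, ht]⟩
      · simp [commonPrefix, hab]

lemma commonPrefix_prefix_right {β : Type} [DecidableEq β] :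
    ∀ (l l' : List β), commonPrefix l l' <+: l' := by
  intro l
  induction l with
  | nil => intro l'; cases l' <;> simp [commonPrefix]
  | cons a as ih =>
    intro l'
    cases l' with
    | nil => simp [commonPrefix]
    | cons b bs =>
      by_cases hab : a = b
      · subst hab
        obtain ⟨t, ht⟩ := ih bs
        exact ⟨t, by simp [commonPrefix, ht]⟩
      · simp [commonPrefix, hab]

lemma seqAgree_cases {β : Type} [DecidableEq β] {l l' : List β} {m : ℕ}
    (h : (m : ℕ∞) ≤ seqAgree l l') :
    l = l' ∨ (m ≤ l.length ∧ m ≤ l'.length ∧ l.take m = l'.take m) := by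
  rw [seqAgree] at h
  by_cases heq : l = l'
  · exact Or.inl heq
  · right
    rw [if_neg heq] at h
    set cp := commonPrefix l l' with hcp
    have hm : m ≤ cp.length := by exact_mod_cast h
    obtain ⟨t, ht⟩ := commonPrefix_prefix_left l l'
    obtain ⟨t', ht'⟩ := commonPrefix_prefix_right l l'
    rw [← hcp] at ht ht'
    have h1 : m ≤ l.length := by
      rw [← ht, List.length_append]; omega
    have h2 : m ≤ l'.length := by
      rw [← ht', List.length_append]; omega
    refine ⟨h1, h2, ?_⟩
    have hz : m - cp.length = 0 := by omega
    rw [← ht, ← ht', List.take_append, List.take_append, hz,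
      List.take_zero]
    simp

lemma pw_len_ge {l : List (FreeGroup α)} (h : ∀ p ∈ l, p ≠ 1) :
    l.length ≤ (pw l).length := by
  induction l with
  | nil => simp [pw]
  | cons a t ih =>
    have ha : a.toWord ≠ [] := by
      rw [Ne, FreeGroup.toWord_eq_nil_iff]
      exact h a (List.mem_cons_self)
    have h1 : 1 ≤ a.toWord.length := List.length_pos_iff.2 ha
    have ht := ih (fun p hp => h p (List.mem_cons_of_mem a hp))
    have : pw (a :: t) = a.toWord ++ pw t := by simp [pw]
    rw [this, List.length_append, List.length_cons]
    omega

/-- main case analysis for the c-parts -/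
lemma cSeq_cases (dec : Decomp α) {l l' : List (FreeGroup α)} {m : ℕ}
    (hmem : ∀ p ∈ l, p ∈ dec.pieces)
    (hagree : (m : ℕ∞) ≤ seqAgree (seqInv l) (seqInv l')) :
    pw l = pw l' ∨ ∃ X X' S : List (α × Bool),
      pw l = X ++ S ∧ pw l' = X' ++ S ∧ m ≤ S.length := by
  rcases seqAgree_cases hagree with heq | ⟨h1, h2, h3⟩
  · exact Or.inl (by rw [seqInv_inj heq])
  · right
    rw [seqInv_take, seqInv_take] at h3
    rw [seqInv_length] at h1 h2
    have hS : l.drop (l.length - m) = l'.drop (l'.length - m) := seqInv_inj h3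
    refine ⟨pw (l.take (l.length - m)), pw (l'.take (l'.length - m)),
      pw (l.drop (l.length - m)), ?_, ?_, ?_⟩
    · rw [← pw_append, List.take_append_drop]
    · rw [hS, ← pw_append, List.take_append_drop]
    · have hlen : (l.drop (l.length - m)).length = m := by
        rw [List.length_drop]; omega
      have hmm : ∀ p ∈ l.drop (l.length - m), p ≠ 1 := by
        intro p hp hp1
        have := hmem p (List.drop_subset _ l hp)
        rw [hp1] at this
        exact dec.one_notin_pieces this
      have := pw_len_ge hmm
      omega

end BrooksC2

namespace BrooksC3

open FreeGroup List BrooksAux BrooksAux2 BrooksB BrooksC BrooksC2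

variable {α : Type} [DecidableEq α]

lemma pw_seqInv (l : List (FreeGroup α)) : pw (seqInv l) = FreeGroup.invRev (pw l) :=
  seqInv_join l

lemma norm_toWord (x : FreeGroup α) : FreeGroup.norm x = x.toWord.length := rfl

lemma grp_id {G : Type*} [Group G] (a b c r1 r2 g h : G)
    (e1 : a * r1 * b⁻¹ = g) (e2 : b * r2 * c⁻¹ = h) :
    h⁻¹ * g⁻¹ = c * (r2⁻¹ * r1⁻¹) * a⁻¹ := by
  rw [← e1, ← e2]
  group

lemma triangle_words (dec : Decomp α) (g h : FreeGroup α) :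
    g.toWord = pw (cSeq1 dec.D g h) ++ pw (rSeq1 dec.D g h)
        ++ FreeGroup.invRev (pw (cSeq2 dec.D g h))
    ∧ h.toWord = pw (cSeq2 dec.D g h) ++ pw (rSeq2 dec.D g h)
        ++ FreeGroup.invRev (pw (cSeq3 dec.D g h))
    ∧ (g * h).toWord = pw (cSeq1 dec.D g h) ++ FreeGroup.invRev (pw (rSeq3 dec.D g h))
        ++ FreeGroup.invRev (pw (cSeq3 dec.D g h))
    ∧ ((rSeq1 dec.D g h).prod).toWord = pw (rSeq1 dec.D g h)
    ∧ ((rSeq2 dec.D g h).prod).toWord = pw (rSeq2 dec.D g h)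
    ∧ ((rSeq3 dec.D g h).prod).toWord = pw (rSeq3 dec.D g h)
    ∧ (rSeq3 dec.D g h).prod = (rSeq2 dec.D g h).prod⁻¹ * (rSeq1 dec.D g h).prod⁻¹ := by
  have t1 := dec.triangle₁ g h
  have t2 := dec.triangle₂ g h
  have t3 := dec.triangle₃ g h
  have w1 : g.toWord = pw (cSeq1 dec.D g h) ++ pw (rSeq1 dec.D g h)
      ++ FreeGroup.invRev (pw (cSeq2 dec.D g h)) := by
    rw [pw_eq dec g, t1, pw_append, pw_append, pw_seqInv]
  have w2 : h.toWord = pw (cSeq2 dec.D g h) ++ pw (rSeq2 dec.D g h)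
      ++ FreeGroup.invRev (pw (cSeq3 dec.D g h)) := by
    rw [pw_eq dec h, t2, pw_append, pw_append, pw_seqInv]
  have w3' : (h⁻¹ * g⁻¹).toWord = pw (cSeq3 dec.D g h) ++ pw (rSeq3 dec.D g h)
      ++ FreeGroup.invRev (pw (cSeq1 dec.D g h)) := by
    rw [pw_eq dec (h⁻¹ * g⁻¹), t3, pw_append, pw_append, pw_seqInv]
  have w3 : (g * h).toWord = pw (cSeq1 dec.D g h) ++ FreeGroup.invRev (pw (rSeq3 dec.D g h))
      ++ FreeGroup.invRev (pw (cSeq3 dec.D g h)) := by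
    have hx : (g * h) = (h⁻¹ * g⁻¹)⁻¹ := by simp
    rw [hx, FreeGroup.toWord_inv, w3', invRev_append, invRev_append,
      FreeGroup.invRev_invRev, List.append_assoc]
  have m1 : ((rSeq1 dec.D g h).prod).toWord = pw (rSeq1 dec.D g h) :=
    mid_word dec g _ _ _ t1
  have m2 : ((rSeq2 dec.D g h).prod).toWord = pw (rSeq2 dec.D g h) :=
    mid_word dec h _ _ _ t2
  have m3 : ((rSeq3 dec.D g h).prod).toWord = pw (rSeq3 dec.D g h) :=
    mid_word dec (h⁻¹ * g⁻¹) _ _ _ t3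
  have e1 : (cSeq1 dec.D g h).prod * (rSeq1 dec.D g h).prod * ((cSeq2 dec.D g h).prod)⁻¹
      = g := by
    conv_rhs => rw [← dec.prod_eq g, t1]
    rw [prod3, seqInv_prod]
  have e2 : (cSeq2 dec.D g h).prod * (rSeq2 dec.D g h).prod * ((cSeq3 dec.D g h).prod)⁻¹
      = h := by
    conv_rhs => rw [← dec.prod_eq h, t2]
    rw [prod3, seqInv_prod]
  have e3 : (cSeq3 dec.D g h).prod * (rSeq3 dec.D g h).prod * ((cSeq1 dec.D g h).prod)⁻¹
      = h⁻¹ * g⁻¹ := by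
    conv_rhs => rw [← dec.prod_eq (h⁻¹ * g⁻¹), t3]
    rw [prod3, seqInv_prod]
  have key : (h⁻¹ * g⁻¹ : FreeGroup α)
      = (cSeq3 dec.D g h).prod * ((rSeq2 dec.D g h).prod⁻¹ * (rSeq1 dec.D g h).prod⁻¹)
        * ((cSeq1 dec.D g h).prod)⁻¹ :=
    grp_id _ _ _ _ _ g h e1 e2
  have e4 := e3.trans key
  have hRid : (rSeq3 dec.D g h).prod
      = (rSeq2 dec.D g h).prod⁻¹ * (rSeq1 dec.D g h).prod⁻¹ :=
    mul_left_cancel (mul_right_cancel e4)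
  exact ⟨w1, w2, w3, m1, m2, m3, hRid⟩

lemma take_mid (X Y Z : List (α × Bool)) {t : ℕ} (h1 : X.length ≤ t)
    (h2 : t ≤ X.length + Y.length) :
    (X ++ Y ++ Z).take t = X ++ Y.take (t - X.length) := by
  rw [List.append_assoc, List.take_append, List.take_of_length_le h1,
    List.take_append, show t - X.length - Y.length = 0 by omega,
    List.take_zero, List.append_nil]

lemma drop_mid (X Y Z : List (α × Bool)) {t : ℕ} (h1 : X.length ≤ t)
    (h2 : t ≤ X.length + Y.length) :
    (X ++ Y ++ Z).drop t = Y.drop (t - X.length) ++ Z := by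
  rw [List.append_assoc, List.drop_append, List.drop_eq_nil_of_le h1,
    List.nil_append, List.drop_append,
    show t - X.length - Y.length = 0 by omega, List.drop_zero]

lemma drop_last_window (X Y : List (α × Bool)) {k : ℕ} (hk : k ≤ Y.length) :
    (X ++ Y).drop ((X ++ Y).length - k) = Y.drop (Y.length - k) := by
  rw [List.length_append, List.drop_append,
    List.drop_eq_nil_of_le (by omega), List.nil_append]
  congr 1
  omega

lemma take_window (Z W : List (α × Bool)) {k : ℕ} (h : k ≤ Z.length) :
    (Z ++ W).take k = Z.take k := by
  rw [List.take_append, show k - Z.length = 0 by omega, List.take_zero,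
    List.append_nil]

lemma key_eq (w : FreeGroup α) (hw1 : 1 ≤ w.toWord.length) (dec : Decomp α)
    (g h g' h' : FreeGroup α)
    (hr1 : rSeq1 dec.D g h = rSeq1 dec.D g' h')
    (hr2 : rSeq2 dec.D g h = rSeq2 dec.D g' h')
    (hr3 : rSeq3 dec.D g h = rSeq3 dec.D g' h')
    (ha1 : (w.toWord.length : ℕ∞)
      ≤ seqAgree (seqInv (cSeq1 dec.D g h)) (seqInv (cSeq1 dec.D g' h')))
    (ha2 : (w.toWord.length : ℕ∞)
      ≤ seqAgree (seqInv (cSeq2 dec.D g h)) (seqInv (cSeq2 dec.D g' h')))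
    (ha3 : (w.toWord.length : ℕ∞)
      ≤ seqAgree (seqInv (cSeq3 dec.D g h)) (seqInv (cSeq3 dec.D g' h'))) :
    d1 (brooksQM w) g h = d1 (brooksQM w) g' h' := by
  set m := w.toWord.length with hm
  set k := m - 1 with hk
  obtain ⟨A, c, B, hA, hB, hAB⟩ := tripod g h
  obtain ⟨A', c', B', hA', hB', hAB'⟩ := tripod g' h'
  obtain ⟨w1, w2, w3, m1, m2, m3, hRid⟩ := triangle_words dec g h
  obtain ⟨w1', w2', w3', m1', m2', m3', hRid'⟩ := triangle_words dec g' h'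
  simp only [← hr1, ← hr2, ← hr3] at w1' w2' w3' m1' m2' m3' hRid'
  set P1 := pw (cSeq1 dec.D g h) with hP1
  set P2 := pw (cSeq2 dec.D g h) with hP2
  set P3 := pw (cSeq3 dec.D g h) with hP3
  set P1' := pw (cSeq1 dec.D g' h') with hP1'
  set P2' := pw (cSeq2 dec.D g' h') with hP2'
  set P3' := pw (cSeq3 dec.D g' h') with hP3'
  set M1 := pw (rSeq1 dec.D g h) with hM1
  set M2 := pw (rSeq2 dec.D g h) with hM2
  set M3 := pw (rSeq3 dec.D g h) with hM3
  -- membership facts for cSeq's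
  have hmem1 : ∀ p ∈ cSeq1 dec.D g h, p ∈ dec.pieces := by
    intro p hp
    apply dec.mem_pieces g
    rw [dec.triangle₁ g h]
    exact List.mem_append.2 (Or.inl (List.mem_append.2 (Or.inl hp)))
  have hmem2 : ∀ p ∈ cSeq2 dec.D g h, p ∈ dec.pieces := by
    intro p hp
    apply dec.mem_pieces h
    rw [dec.triangle₂ g h]
    exact List.mem_append.2 (Or.inl (List.mem_append.2 (Or.inl hp)))
  have hmem3 : ∀ p ∈ cSeq3 dec.D g h, p ∈ dec.pieces := by
    intro p hp
    apply dec.mem_pieces (h⁻¹ * g⁻¹)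
    rw [dec.triangle₃ g h]
    exact List.mem_append.2 (Or.inl (List.mem_append.2 (Or.inl hp)))
  have H1 := cSeq_cases dec hmem1 ha1
  have H2 := cSeq_cases dec hmem2 ha2
  have H3 := cSeq_cases dec hmem3 ha3
  rw [← hP1, ← hP1'] at H1
  rw [← hP2, ← hP2'] at H2
  rw [← hP3, ← hP3'] at H3
  -- length bookkeeping
  have la : A.length + c.length = g.toWord.length := by
    have := congrArg List.length hA
    simp at this
    omega
  have lb : c.length + B.length = h.toWord.length := by
    have := congrArg List.length hB
    simp [invRev_length] at this
    omega
  have lab : A.length + B.length = (g * h).toWord.length := by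
    have := congrArg List.length hAB
    simp at this
    omega
  have la' : A'.length + c'.length = g'.toWord.length := by
    have := congrArg List.length hA'
    simp at this
    omega
  have lb' : c'.length + B'.length = h'.toWord.length := by
    have := congrArg List.length hB'
    simp [invRev_length] at this
    omega
  have lab' : A'.length + B'.length = (g' * h').toWord.length := by
    have := congrArg List.length hAB'
    simp at this
    omega
  have lg : g.toWord.length = P1.length + M1.length + P2.length := by
    rw [w1]
    simp [invRev_length]
    omega
  have lh : h.toWord.length = P2.length + M2.length + P3.length := by
    rw [w2]
    simp [invRev_length]
    omega
  have lG : (g * h).toWord.length = P1.length + M3.length + P3.length := by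
    rw [w3]
    simp [invRev_length]
    omega
  have lg' : g'.toWord.length = P1'.length + M1.length + P2'.length := by
    rw [w1']
    simp [invRev_length]
    omega
  have lh' : h'.toWord.length = P2'.length + M2.length + P3'.length := by
    rw [w2']
    simp [invRev_length]
    omega
  have lG' : (g' * h').toWord.length = P1'.length + M3.length + P3'.length := by
    rw [w3']
    simp [invRev_length]
    omega
  -- norm triangle inequalities
  have nm1 : FreeGroup.norm ((rSeq1 dec.D g h).prod) = M1.length := by
    rw [norm_toWord, m1]
  have nm2 : FreeGroup.norm ((rSeq2 dec.D g h).prod) = M2.length := by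
    rw [norm_toWord, m2]
  have nm3 : FreeGroup.norm ((rSeq3 dec.D g h).prod) = M3.length := by
    rw [norm_toWord, m3]
  have nb3 : M3.length ≤ M1.length + M2.length := by
    rw [← nm1, ← nm2, ← nm3, hRid]
    calc FreeGroup.norm ((rSeq2 dec.D g h).prod⁻¹ * (rSeq1 dec.D g h).prod⁻¹)
        ≤ FreeGroup.norm ((rSeq2 dec.D g h).prod⁻¹)
          + FreeGroup.norm ((rSeq1 dec.D g h).prod⁻¹) := FreeGroup.norm_mul_le _ _
      _ = FreeGroup.norm ((rSeq1 dec.D g h).prod)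
          + FreeGroup.norm ((rSeq2 dec.D g h).prod) := by
          rw [FreeGroup.norm_inv_eq, FreeGroup.norm_inv_eq]; omega
  have hRid1 : (rSeq1 dec.D g h).prod
      = (rSeq3 dec.D g h).prod⁻¹ * (rSeq2 dec.D g h).prod⁻¹ := by
    rw [hRid]; group
  have hRid2 : (rSeq2 dec.D g h).prod
      = (rSeq1 dec.D g h).prod⁻¹ * (rSeq3 dec.D g h).prod⁻¹ := by
    rw [hRid]; group
  have nb1 : M1.length ≤ M2.length + M3.length := by
    rw [← nm1, ← nm2, ← nm3, hRid1]
    calc FreeGroup.norm ((rSeq3 dec.D g h).prod⁻¹ * (rSeq2 dec.D g h).prod⁻¹)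
        ≤ FreeGroup.norm ((rSeq3 dec.D g h).prod⁻¹)
          + FreeGroup.norm ((rSeq2 dec.D g h).prod⁻¹) := FreeGroup.norm_mul_le _ _
      _ = FreeGroup.norm ((rSeq2 dec.D g h).prod)
          + FreeGroup.norm ((rSeq3 dec.D g h).prod) := by
          rw [FreeGroup.norm_inv_eq, FreeGroup.norm_inv_eq]; omega
  have nb2 : M2.length ≤ M1.length + M3.length := by
    rw [← nm1, ← nm2, ← nm3, hRid2]
    calc FreeGroup.norm ((rSeq1 dec.D g h).prod⁻¹ * (rSeq3 dec.D g h).prod⁻¹)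
        ≤ FreeGroup.norm ((rSeq1 dec.D g h).prod⁻¹)
          + FreeGroup.norm ((rSeq3 dec.D g h).prod⁻¹) := FreeGroup.norm_mul_le _ _
      _ = FreeGroup.norm ((rSeq1 dec.D g h).prod)
          + FreeGroup.norm ((rSeq3 dec.D g h).prod) := by
          rw [FreeGroup.norm_inv_eq, FreeGroup.norm_inv_eq]
  -- the central offset κ
  set κ := A.length - P1.length with hκ
  have hk1 : A.length = P1.length + κ := by omega
  have hk2 : κ ≤ M1.length := by omega
  have hk3 : κ ≤ M3.length := by omega
  have hk1' : A'.length = P1'.length + κ := by omega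
  -- values of A, c, B
  have hAv : A = P1 ++ M1.take κ := by
    have h0 : A = (g.toWord).take A.length := by
      rw [hA]
      exact (List.take_left (l₁ := A) (l₂ := c)).symm
    rw [h0, w1, take_mid _ _ _ (by omega) (by omega), hk1]
    simp
  have hcv : c = M1.drop κ ++ FreeGroup.invRev P2 := by
    have h0 : c = (g.toWord).drop A.length := by
      rw [hA]
      exact (List.drop_left (l₁ := A) (l₂ := c)).symm
    rw [h0, w1, drop_mid _ _ _ (by omega) (by omega), hk1]
    simp
  have hBv : B = (FreeGroup.invRev M3).drop κ ++ FreeGroup.invRev P3 := by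
    have h0 : B = ((g * h).toWord).drop A.length := by
      rw [hAB]
      exact (List.drop_left (l₁ := A) (l₂ := B)).symm
    rw [h0, w3, drop_mid _ _ _ (by omega) (by simp [invRev_length]; omega), hk1]
    simp
  have hAv' : A' = P1' ++ M1.take κ := by
    have h0 : A' = (g'.toWord).take A'.length := by
      rw [hA']
      exact (List.take_left (l₁ := A') (l₂ := c')).symm
    rw [h0, w1', take_mid _ _ _ (by omega) (by omega), hk1']
    simp
  have hcv' : c' = M1.drop κ ++ FreeGroup.invRev P2' := by
    have h0 : c' = (g'.toWord).drop A'.length := by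
      rw [hA']
      exact (List.drop_left (l₁ := A') (l₂ := c')).symm
    rw [h0, w1', drop_mid _ _ _ (by omega) (by omega), hk1']
    simp
  have hBv' : B' = (FreeGroup.invRev M3).drop κ ++ FreeGroup.invRev P3' := by
    have h0 : B' = ((g' * h').toWord).drop A'.length := by
      rw [hAB']
      exact (List.drop_left (l₁ := A') (l₂ := B')).symm
    rw [h0, w3', drop_mid _ _ _ (by omega) (by simp [invRev_length]; omega), hk1']
    simp
  -- window agreements
  have WA : A.drop (A.length - k) = A'.drop (A'.length - k) := by
    rcases H1 with hP | ⟨X, X', S, hX, hX', hSlen⟩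
    · rw [hAv, hAv', hP]
    · rw [hAv, hAv', hX, hX', List.append_assoc, List.append_assoc,
        drop_last_window X _ (by simp; omega), drop_last_window X' _ (by simp; omega)]
  have Wc : c.take k = c'.take k := by
    rcases H2 with hP | ⟨X, X', S, hX, hX', hSlen⟩
    · rw [hcv, hcv', hP]
    · rw [hcv, hcv', hX, hX', BrooksAux2.invRev_append, BrooksAux2.invRev_append, ← List.append_assoc,
        ← List.append_assoc,
        take_window (M1.drop κ ++ FreeGroup.invRev S) (FreeGroup.invRev X)
          (by simp [invRev_length]; omega),
        take_window (M1.drop κ ++ FreeGroup.invRev S) (FreeGroup.invRev X')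
          (by simp [invRev_length]; omega)]
  have WB : B.take k = B'.take k := by
    rcases H3 with hP | ⟨X, X', S, hX, hX', hSlen⟩
    · rw [hBv, hBv', hP]
    · rw [hBv, hBv', hX, hX', BrooksAux2.invRev_append, BrooksAux2.invRev_append, ← List.append_assoc,
        ← List.append_assoc,
        take_window ((FreeGroup.invRev M3).drop κ ++ FreeGroup.invRev S) (FreeGroup.invRev X)
          (by simp [invRev_length]; omega),
        take_window ((FreeGroup.invRev M3).drop κ ++ FreeGroup.invRev S) (FreeGroup.invRev X')
          (by simp [invRev_length]; omega)]
  rw [d1_formula w g h hw1 hA hB hAB, d1_formula w g' h' hw1 hA' hB' hAB', ← hm, ← hk,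
    WA, Wc, WB]

end BrooksC3

/-- Proposition 3.14 (2): a Brooks quasimorphism `φ_w` on a word `w`
of length `m` satisfies `δ¹φ_w(g,h) = δ¹φ_w(g',h')` whenever `N_Δ((g,h),(g',h')) ≥ m`;
hence `φ_w` is `Δ`-continuous for every decomposition `Δ`. -/
theorem brooks_is_continuous {α : Type} [Fintype α] [DecidableEq α]
    (hab : ∃ a b : α, a ≠ b) (w : FreeGroup α) (hw : NonSelfOverlapping w)
    (dec : Decomp α) :
    (∀ p q : FreeGroup α × FreeGroup α, (wlen w : ℕ∞) ≤ NDelta dec.D p q →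
      d1 (brooksQM w) p.1 p.2 = d1 (brooksQM w) q.1 q.2) ∧
    DeltaContinuousQM dec.D (brooksQM w) := by
  classical
  have hwl : wlen w = w.toWord.length := rfl
  have habs : ∀ g h : FreeGroup α,
      |d1 (brooksQM w) g h| ≤ (6 * (2 * w.toWord.length + 1) : ℝ) := BrooksC.abs_d1_le w
  have hzero : ∀ a b : FreeGroup α, d1 (brooksQM (1 : FreeGroup α)) a b = 0 := by
    intro a b
    simp [d1, brooksQM, inv_one]
  have EQ : ∀ p q : FreeGroup α × FreeGroup α, (wlen w : ℕ∞) ≤ NDelta dec.D p q →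
      d1 (brooksQM w) p.1 p.2 = d1 (brooksQM w) q.1 q.2 := by
    intro p q hN
    by_cases hpq : p = q
    · rw [hpq]
    · by_cases hw1 : 1 ≤ w.toWord.length
      · rw [NDelta, if_neg hpq] at hN
        by_cases hr : rSeq1 dec.D p.1 p.2 = rSeq1 dec.D q.1 q.2
            ∧ rSeq2 dec.D p.1 p.2 = rSeq2 dec.D q.1 q.2
            ∧ rSeq3 dec.D p.1 p.2 = rSeq3 dec.D q.1 q.2
        · rw [if_pos hr] at hN
          rw [le_min_iff, le_min_iff] at hN
          exact BrooksC3.key_eq w hw1 dec p.1 p.2 q.1 q.2 hr.1 hr.2.1 hr.2.2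
            hN.1 hN.2.1 hN.2.2
        · rw [if_neg hr] at hN
          exfalso
          have h0 : (wlen w : ℕ∞) = 0 := le_antisymm hN zero_le
          have : wlen w = 0 := by exact_mod_cast h0
          rw [hwl] at this
          omega
      · have hw0 : w = 1 := by
          rw [← FreeGroup.toWord_eq_nil_iff, ← List.length_eq_zero_iff]
          omega
        subst hw0
        rw [hzero, hzero]
  refine ⟨EQ, BrooksC.brooks_symm w, ⟨6 * (2 * w.toWord.length + 1) + 1, by positivity, ?_⟩, ?_⟩
  · intro g h
    have := habs g h
    calc |d1 (brooksQM w) g h| ≤ (6 * (2 * w.toWord.length + 1) : ℝ) := this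
    _ < 6 * (2 * w.toWord.length + 1) + 1 := by linarith
  · refine ⟨fun N => if N < wlen w then 2 * (6 * (2 * w.toWord.length + 1)) else 0, ?_, ?_, ?_⟩
    · intro j
      dsimp only
      split
      · positivity
      · exact le_refl 0
    · apply summable_of_ne_finset_zero (s := Finset.range (wlen w))
      intro b hb
      rw [Finset.mem_range] at hb
      rw [if_neg hb]
    · intro p q hpq N hNd
      dsimp only
      by_cases hNm : N < wlen w
      · rw [if_pos hNm]
        calc |d1 (brooksQM w) p.1 p.2 - d1 (brooksQM w) q.1 q.2|
            ≤ |d1 (brooksQM w) p.1 p.2| + |d1 (brooksQM w) q.1 q.2| := abs_sub _ _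
          _ ≤ 2 * (6 * (2 * w.toWord.length + 1)) := by
              linarith [habs p.1 p.2, habs q.1 q.2]
      · rw [if_neg hNm]
        have heq : d1 (brooksQM w) p.1 p.2 = d1 (brooksQM w) q.1 q.2 := by
          apply EQ p q
          rw [hNd]
          exact_mod_cast Nat.cast_le.2 (by omega)
        rw [heq, sub_self, abs_zero]
end

section
/- Let F be a non-abelian free group and w ∈ F a non self-overlapping reduced word. Then every g ∈ F can be written uniquely in the form g = u₁ w^{ε₁} u₂ ⋯ u_{k−1} w^{ε_{k−1}} u_k as a reduced product, where the u_j ∈ F may be trivial, ε_j ∈ {−1, +1}, and no u_j contains w or w⁻¹ as a subword. -/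
namespace BF
variable {α : Type} [DecidableEq α]
open FreeGroup List

/-- pattern-free reducedness of a word -/
def RedL (L : List (α × Bool)) : Prop :=
  ∀ (L₂ L₃ : List (α × Bool)) (x : α) (b : Bool), L ≠ L₂ ++ (x, b) :: (x, !b) :: L₃

theorem redL_toWord (g : FreeGroup α) : RedL g.toWord := by
  intro L₂ L₃ x b h
  rw [← FreeGroup.reduce_toWord g] at h
  exact FreeGroup.reduce.not h

omit [DecidableEq α] in
theorem redL_infix {L M : List (α × Bool)} (h : RedL L) (hm : M <:+: L) : RedL M := by
  obtain ⟨p, s, rfl⟩ := hm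
  intro L₂ L₃ x b hM
  exact h (p ++ L₂) (L₃ ++ s) x b (by rw [hM]; simp)

theorem reduce_eq_self_of_redL {L : List (α × Bool)} (h : RedL L) : FreeGroup.reduce L = L := by
  have hred : FreeGroup.Red L (FreeGroup.reduce L) := FreeGroup.reduce.red
  rcases Relation.ReflTransGen.cases_head hred with heq | ⟨M, hstep, _⟩
  · exact heq.symm
  · cases hstep with
    | @not L₁ L₂ x b => exact absurd rfl (h L₁ L₂ x b)

theorem toWord_mk_of_redL {L : List (α × Bool)} (h : RedL L) :
    (FreeGroup.mk L).toWord = L := by rw [FreeGroup.toWord_mk, reduce_eq_self_of_redL h]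

theorem prod_eq_mk_join (l : List (FreeGroup α)) :
    l.prod = FreeGroup.mk (l.map FreeGroup.toWord).flatten := by
  induction l with
  | nil => simp [FreeGroup.one_eq_mk]
  | cons x xs ih =>
      simp only [List.prod_cons, List.map_cons, List.flatten_cons, ih, ← FreeGroup.mul_mk,
        FreeGroup.mk_toWord]

theorem redProd_of_redL_join (l : List (FreeGroup α))
    (h : RedL (l.map FreeGroup.toWord).flatten) :
    ReducedProd l ∧ l.prod.toWord = (l.map FreeGroup.toWord).flatten := by
  have h1 : l.prod.toWord = (l.map FreeGroup.toWord).flatten := by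
    rw [prod_eq_mk_join, toWord_mk_of_redL h]
  refine ⟨?_, h1⟩
  show wlen l.prod = _
  unfold wlen
  rw [h1, List.length_flatten]
  simp [Function.comp_def, wlen]

theorem join_of_redProd (l : List (FreeGroup α)) (h : ReducedProd l) :
    l.prod.toWord = (l.map FreeGroup.toWord).flatten := by
  have h1 : l.prod.toWord = FreeGroup.reduce (l.map FreeGroup.toWord).flatten := by
    rw [prod_eq_mk_join, FreeGroup.toWord_mk]
  have hred : FreeGroup.Red (l.map FreeGroup.toWord).flatten
      (FreeGroup.reduce (l.map FreeGroup.toWord).flatten) := FreeGroup.reduce.red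
  have hlen : l.prod.toWord.length = (l.map FreeGroup.toWord).flatten.length := by
    have h2 : wlen l.prod = (l.map wlen).sum := h
    unfold wlen at h2
    rw [h2, List.length_flatten]
    simp [Function.comp_def, wlen]
  have hlen2 : (FreeGroup.reduce (l.map FreeGroup.toWord).flatten).length =
      (l.map FreeGroup.toWord).flatten.length := by rw [← h1]; exact hlen
  rw [h1]
  exact hred.sublist.eq_of_length hlen2

end BF
namespace BF
variable {α : Type} [DecidableEq α]
open FreeGroup List

/-- letter inverse -/
def inv1 (x : α × Bool) : α × Bool := (x.1, !x.2)

omit [DecidableEq α] in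
theorem inv1_inv1 (x : α × Bool) : inv1 (inv1 x) = x := by simp [inv1]

omit [DecidableEq α] in
theorem invRev_eq (L : List (α × Bool)) : FreeGroup.invRev L = (L.map inv1).reverse := rfl

omit [DecidableEq α] in
theorem invRev_getElem? (L : List (α × Bool)) (j : ℕ) (hj : j < L.length) :
    (FreeGroup.invRev L)[j]? = (L[L.length - 1 - j]?).map inv1 := by
  rw [invRev_eq, List.getElem?_reverse (by simpa using hj)]
  simp

/-- occurrence of `X` in `L` at position `s` -/
def Occ (X L : List (α × Bool)) (s : ℕ) : Prop := (L.drop s).take X.length = X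

omit [DecidableEq α] in
theorem occ_le {X L : List (α × Bool)} {s : ℕ} (hX : X ≠ []) (h : Occ X L s) :
    s + X.length ≤ L.length := by
  have h1 := congrArg List.length h
  simp only [List.length_take, List.length_drop] at h1
  have h2 : 0 < X.length := List.length_pos_iff.mpr hX
  omega

omit [DecidableEq α] in
theorem occ_getElem? {X L : List (α × Bool)} {s : ℕ} (h : Occ X L s) {i : ℕ}
    (hi : i < X.length) : L[s + i]? = X[i]? := by
  conv_rhs => rw [← h]
  rw [List.getElem?_take]
  simp [hi, List.getElem?_drop]

omit [DecidableEq α] in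
theorem occ_split {X L : List (α × Bool)} {s : ℕ} (h : Occ X L s) :
    L = L.take s ++ X ++ L.drop (s + X.length) := by
  conv_lhs => rw [← List.take_append_drop s L]
  rw [List.append_assoc]
  congr 1
  conv_lhs => rw [← List.take_append_drop X.length (L.drop s)]
  rw [h, List.drop_drop]

omit [DecidableEq α] in
theorem occ_infix {X L : List (α × Bool)} {s : ℕ} (h : Occ X L s) : X <:+: L :=
  ⟨L.take s, L.drop (s + X.length), (occ_split h).symm⟩

omit [DecidableEq α] in
theorem infix_occ {X L : List (α × Bool)} (h : X <:+: L) : ∃ s, Occ X L s := by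
  obtain ⟨p, t, rfl⟩ := h
  refine ⟨p.length, ?_⟩
  unfold Occ
  rw [List.append_assoc, List.drop_left, List.take_left]

omit [DecidableEq α] in
theorem occ_take {X L : List (α × Bool)} {s t : ℕ} (h : Occ X L s)
    (hle : s + X.length ≤ t) : Occ X (L.take t) s := by
  unfold Occ at h ⊢
  rw [List.drop_take, List.take_take, min_eq_left (by omega)]
  exact h

omit [DecidableEq α] in
theorem occ_of_take {X L : List (α × Bool)} {s t : ℕ} (hX : X ≠ [])
    (h : Occ X (L.take t) s) : Occ X L s ∧ s + X.length ≤ t := by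
  have hle := occ_le hX h
  rw [List.length_take] at hle
  have hle2 : s + X.length ≤ t := le_trans hle (min_le_left _ _)
  unfold Occ at h
  rw [List.drop_take, List.take_take, min_eq_left (by omega)] at h
  exact ⟨h, hle2⟩

omit [DecidableEq α] in
theorem redL_adj {S : List (α × Bool)} (hS : RedL S) {i : ℕ} (hi : i + 1 < S.length)
    (heq : S[i + 1]'hi = inv1 (S[i]'(by omega))) : False := by
  apply hS (S.take i) (S.drop (i + 2)) (S[i]'(by omega)).1 (S[i]'(by omega)).2
  conv_lhs => rw [← List.take_append_drop i S,
    List.drop_eq_getElem_cons (show i < S.length by omega),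
    List.drop_eq_getElem_cons (show i + 1 < S.length from hi)]
  rw [heq]
  simp [inv1]

omit [DecidableEq α] in
theorem noInvPal {S : List (α × Bool)} (hS : RedL S) (hne : S ≠ [])
    (h : ∀ i < S.length, S[i]? = (S[S.length - 1 - i]?).map inv1) : False := by
  set m := S.length with hm
  have hm0 : 0 < m := List.length_pos_iff.mpr hne
  set i := (m - 1) / 2 with hidef
  have hi : i < m := by omega
  have h1 := h i hi
  rcases Nat.even_or_odd m with he | ho
  · have hji : m - 1 - i = i + 1 := by obtain ⟨k, hk⟩ := he; omega
    rw [hji] at h1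
    have hi1 : i + 1 < m := by omega
    rw [List.getElem?_eq_getElem hi, List.getElem?_eq_getElem hi1, Option.map_some] at h1
    have h2 : S[i]'hi = inv1 (S[i + 1]'hi1) := Option.some.inj h1
    exact redL_adj hS hi1 (by rw [h2, inv1_inv1])
  · have hji : m - 1 - i = i := by obtain ⟨k, hk⟩ := ho; omega
    rw [hji] at h1
    rw [List.getElem?_eq_getElem hi, Option.map_some] at h1
    have h2 : S[i]'hi = inv1 (S[i]'hi) := Option.some.inj h1
    have := congrArg Prod.snd h2
    simp [inv1] at this

end BF
namespace BF
variable {α : Type} [DecidableEq α]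
open FreeGroup List

theorem inv1_injective : Function.Injective (inv1 (α := α)) :=
  Function.Involutive.injective inv1_inv1

theorem take_infix (L : List (α × Bool)) (k : ℕ) : L.take k <:+: L :=
  (List.take_prefix _ _).isInfix

theorem drop_infix (L : List (α × Bool)) (k : ℕ) : L.drop k <:+: L :=
  (List.drop_suffix _ _).isInfix

theorem border_false (w : FreeGroup α) (hw : NonSelfOverlapping w) (b : ℕ)
    (hb0 : 0 < b) (hbn : b < w.toWord.length)
    (hrel : ∀ i < b, w.toWord[i]? = w.toWord[w.toWord.length - b + i]?) : False := by
  induction b using Nat.strong_induction_on with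
  | _ b ih =>
  set W := w.toWord with hWdef
  set n := W.length with hndef
  by_cases hcase : 2 * b ≤ n
  · -- construct x y x
    have hsuf : W.drop (n - b) = W.take b := by
      apply List.ext_getElem?
      intro i
      by_cases hib : i < b
      · rw [List.getElem?_drop, List.getElem?_take]
        simp only [hib, if_pos]
        exact (hrel i hib).symm
      · rw [List.getElem?_eq_none, List.getElem?_eq_none]
        · simp [hib]; omega
        · rw [List.length_drop]; omega
    have hW : W = W.take b ++ (W.drop b).take (n - b - b) ++ W.take b := by
      conv_lhs => rw [← List.take_append_drop (n - b) W]
      rw [hsuf]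
      congr 1
      conv_lhs => rw [← List.take_append_drop b (W.take (n - b))]
      rw [List.take_take, min_eq_left (by omega), List.drop_take]
    have hWred : RedL W := redL_toWord w
    set x := FreeGroup.mk (W.take b) with hxdef
    set y := FreeGroup.mk ((W.drop b).take (n - b - b)) with hydef
    have hxw : x.toWord = W.take b :=
      toWord_mk_of_redL (redL_infix hWred (take_infix W b))
    have hyw : y.toWord = (W.drop b).take (n - b - b) :=
      toWord_mk_of_redL (redL_infix hWred
        ((List.take_prefix _ _).isInfix.trans (drop_infix W b)))
    have hflat : ([x, y, x].map FreeGroup.toWord).flatten = W := by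
      simp only [List.map_cons, List.map_nil, List.flatten_cons, List.flatten_nil,
        List.append_nil, hxw, hyw]
      rw [← List.append_assoc, ← hW]
    have hrp := redProd_of_redL_join [x, y, x] (hflat ▸ hWred)
    apply hw
    refine ⟨x, y, ?_, ?_, hrp.1⟩
    · intro hx1
      have h0 := congrArg List.length (congrArg FreeGroup.toWord hx1)
      rw [hxw, FreeGroup.toWord_one, List.length_take] at h0
      simp only [List.length_nil] at h0
      omega
    · rw [← FreeGroup.mk_toWord (x := w)]
      show FreeGroup.mk W = _
      rw [hW, ← FreeGroup.mul_mk, ← FreeGroup.mul_mk]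
  · -- shrink the border
    set b' := 2 * b - n with hb'def
    have hb'0 : 0 < b' := by omega
    have hb'b : b' < b := by omega
    apply ih b' hb'b hb'0 (by omega)
    intro i hi
    have h1 := hrel i (by omega)
    have h2 := hrel (n - b + i) (by omega)
    rw [h1, h2]
    congr 1
    omega

theorem WneV (w : FreeGroup α) (hw1 : w ≠ 1) : w.toWord ≠ (w⁻¹).toWord := by
  intro hWV
  set W := w.toWord with hWdef
  have hWred : RedL W := redL_toWord w
  have hne : W ≠ [] := fun h => hw1 (FreeGroup.toWord_eq_nil_iff.mp h)
  apply noInvPal hWred hne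
  intro i hi
  conv_lhs => rw [hWV, FreeGroup.toWord_inv]
  exact invRev_getElem? W i hi

theorem occ_no_overlap (w : FreeGroup α) (hw : NonSelfOverlapping w) (hw1 : w ≠ 1)
    {L X Y : List (α × Bool)} {s s' : ℕ} (hL : RedL L)
    (hX : X = w.toWord ∨ X = (w⁻¹).toWord) (hY : Y = w.toWord ∨ Y = (w⁻¹).toWord)
    (h1 : Occ X L s) (h2 : Occ Y L s') (hss : s < s')
    (hss2 : s' < s + w.toWord.length) : False := by
  have hVlen : ((w⁻¹).toWord).length = w.toWord.length := by
    rw [FreeGroup.toWord_inv, FreeGroup.invRev_length]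
  have hXlen : X.length = w.toWord.length := by rcases hX with h | h <;> simp [h, hVlen]
  have hYlen : Y.length = w.toWord.length := by rcases hY with h | h <;> simp [h, hVlen]
  have hWred : RedL w.toWord := redL_toWord w
  have hrel : ∀ i < s + w.toWord.length - s', X[(s' - s) + i]? = Y[i]? := by
    intro i hik
    have e1 : L[s + ((s' - s) + i)]? = X[(s' - s) + i]? := occ_getElem? h1 (by omega)
    have e2 : L[s' + i]? = Y[i]? := occ_getElem? h2 (by omega)
    rw [← e1, ← e2]
    congr 1
    omega
  have hVget : ∀ j < w.toWord.length,
      ((w⁻¹).toWord)[j]? = (w.toWord[w.toWord.length - 1 - j]?).map inv1 := by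
    intro j hj
    rw [FreeGroup.toWord_inv]
    exact invRev_getElem? w.toWord j (by omega)
  have hborder : (∀ i < s + w.toWord.length - s',
      w.toWord[i]? = w.toWord[w.toWord.length - (s + w.toWord.length - s') + i]?) → False := by
    intro hb
    exact border_false w hw (s + w.toWord.length - s') (by omega) (by omega) hb
  rcases hX with hX | hX <;> rcases hY with hY | hY
  · -- W W
    apply hborder
    intro i hik
    have h3 := hrel i hik
    rw [hX, hY] at h3
    have e : w.toWord.length - (s + w.toWord.length - s') + i = (s' - s) + i := by omega
    rw [e]
    exact h3.symm
  · -- W V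
    have hS : RedL (w.toWord.drop (s' - s)) := redL_infix hWred (drop_infix _ _)
    have hSlen : (w.toWord.drop (s' - s)).length = s + w.toWord.length - s' := by
      rw [List.length_drop]; omega
    apply noInvPal hS
    · intro h
      rw [h] at hSlen
      simp at hSlen
      omega
    intro i hi
    rw [hSlen] at hi
    have h3 := hrel i hi
    rw [hX, hY] at h3
    rw [List.getElem?_drop, List.getElem?_drop]
    have h4 := hVget i (by omega)
    rw [h4] at h3
    rw [h3, hSlen]
    congr 2
    omega
  · -- V W
    have hS : RedL (w.toWord.take (s + w.toWord.length - s')) :=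
      redL_infix hWred (take_infix _ _)
    have hSlen : (w.toWord.take (s + w.toWord.length - s')).length
        = s + w.toWord.length - s' := by rw [List.length_take]; omega
    apply noInvPal hS
    · intro h
      rw [h] at hSlen
      simp at hSlen
      omega
    intro i hi
    rw [hSlen] at hi
    have h3 := hrel i hi
    rw [hX, hY] at h3
    have h4 := hVget ((s' - s) + i) (by omega)
    rw [h4] at h3
    rw [List.getElem?_take, List.getElem?_take]
    simp only [hi, if_pos, hSlen]
    have hki : s + w.toWord.length - s' - 1 - i < s + w.toWord.length - s' := by omega
    simp only [hki, if_pos]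
    rw [← h3]
    congr 2
    omega
  · -- V V
    apply hborder
    intro j hjk
    have h3 := hrel (s + w.toWord.length - s' - 1 - j) (by omega)
    rw [hX, hY] at h3
    have h4 := hVget ((s' - s) + (s + w.toWord.length - s' - 1 - j)) (by omega)
    have h5 := hVget (s + w.toWord.length - s' - 1 - j) (by omega)
    rw [h4, h5] at h3
    have h6 := Option.map_injective inv1_injective h3
    have e1 : w.toWord.length - 1 - ((s' - s) + (s + w.toWord.length - s' - 1 - j)) = j := by
      omega
    have e2 : w.toWord.length - 1 - (s + w.toWord.length - s' - 1 - j)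
        = w.toWord.length - (s + w.toWord.length - s') + j := by omega
    rw [e1, e2] at h6
    exact h6

theorem occ_same_pos (w : FreeGroup α) (hw1 : w ≠ 1) {L : List (α × Bool)} {s : ℕ}
    (h1 : Occ w.toWord L s) (h2 : Occ (w⁻¹).toWord L s) : False := by
  apply WneV w hw1
  have hlen : ((w⁻¹).toWord).length = w.toWord.length := by
    rw [FreeGroup.toWord_inv, FreeGroup.invRev_length]
  unfold Occ at h1 h2
  rw [hlen] at h2
  rw [← h1, ← h2]

end BF
namespace BF
variable {α : Type} [DecidableEq α]
open FreeGroup List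

/-- the property of being a valid `w`-factorization of `g` -/
def Valid (w g : FreeGroup α) (f : List (FreeGroup α) × List Bool) : Prop :=
  f.1.length = f.2.length + 1 ∧
  (∀ u ∈ f.1, ¬Subword w u ∧ ¬Subword w⁻¹ u) ∧
  ReducedProd (wfacList w f.1 f.2) ∧
  g = (wfacList w f.1 f.2).prod

theorem wfac_single (w u : FreeGroup α) (eps : List Bool) :
    wfacList w [u] eps = [u] := by cases eps <;> rfl

theorem wfac_cons (w u u₂ : FreeGroup α) (us : List (FreeGroup α)) (e : Bool)
    (eps : List Bool) :
    wfacList w (u :: u₂ :: us) (e :: eps)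
      = u :: (if e then w else w⁻¹) :: wfacList w (u₂ :: us) eps := rfl

theorem subword_iff (x u : FreeGroup α) : Subword x u ↔ ∃ s, Occ x.toWord u.toWord s :=
  ⟨infix_occ, fun ⟨_, hs⟩ => occ_infix hs⟩

theorem valid_join {w g : FreeGroup α} {f : List (FreeGroup α) × List Bool}
    (h : Valid w g f) :
    g.toWord = ((wfacList w f.1 f.2).map FreeGroup.toWord).flatten := by
  rw [h.2.2.2]
  exact join_of_redProd _ h.2.2.1

theorem hnpos (w : FreeGroup α) (hw1 : w ≠ 1) : 0 < w.toWord.length :=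
  List.length_pos_iff.mpr (fun h => hw1 (FreeGroup.toWord_eq_nil_iff.mp h))

theorem hVlen' (w : FreeGroup α) : ((w⁻¹).toWord).length = w.toWord.length := by
  rw [FreeGroup.toWord_inv, FreeGroup.invRev_length]

instance occDecidable (X L : List (α × Bool)) (s : ℕ) : Decidable (Occ X L s) :=
  inferInstanceAs (Decidable (_ = _))

theorem exists_valid (w : FreeGroup α) (hw : NonSelfOverlapping w) (hw1 : w ≠ 1) :
    ∀ N : ℕ, ∀ g : FreeGroup α, g.toWord.length < N → ∃ f, Valid w g f := by
  intro N
  induction N with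
  | zero => intro g h; omega
  | succ N ih =>
    intro g hlen
    have hn : 0 < w.toWord.length := hnpos w hw1
    by_cases hocc : ∃ s, Occ w.toWord g.toWord s ∨ Occ (w⁻¹).toWord g.toWord s
    · set L := g.toWord with hLdef
      have hLred : RedL L := redL_toWord g
      set s₀ := Nat.find hocc with hs₀def
      have hmin : ∀ p < s₀, ¬(Occ w.toWord L p ∨ Occ (w⁻¹).toWord L p) :=
        fun p hp => Nat.find_min hocc hp
      obtain ⟨e, hXocc⟩ : ∃ e : Bool, Occ (if e then w else w⁻¹).toWord L s₀ := by
        rcases Nat.find_spec hocc with h | h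
        · exact ⟨true, h⟩
        · exact ⟨false, h⟩
      have hXlen : (if e then w else w⁻¹).toWord.length = w.toWord.length := by
        cases e <;> simp [hVlen' w]
      have hXne : (if e then w else w⁻¹).toWord ≠ [] := by
        intro h
        rw [← List.length_eq_zero_iff] at h
        omega
      have hle : s₀ + w.toWord.length ≤ L.length := by
        have := occ_le hXne hXocc
        omega
      set r := FreeGroup.mk (L.drop (s₀ + w.toWord.length)) with hrdef
      have hr : r.toWord = L.drop (s₀ + w.toWord.length) :=
        toWord_mk_of_redL (redL_infix hLred (drop_infix _ _))
      have hrlen : r.toWord.length < N := by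
        rw [hr, List.length_drop]
        omega
      obtain ⟨⟨us, eps⟩, hval⟩ := ih r hrlen
      obtain ⟨u₂, us₂, rfl⟩ : ∃ u₂ us₂, us = u₂ :: us₂ := by
        cases us with
        | nil => exact absurd hval.1 (by simp)
        | cons a l => exact ⟨a, l, rfl⟩
      set u := FreeGroup.mk (L.take s₀) with hudef
      have hu : u.toWord = L.take s₀ :=
        toWord_mk_of_redL (redL_infix hLred (take_infix _ _))
      refine ⟨(u :: u₂ :: us₂, e :: eps), ?_, ?_, ?_, ?_⟩
      · have := hval.1
        simp at this ⊢
        omega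
      · intro v hv
        rcases List.mem_cons.mp hv with rfl | hv2
        · constructor
          · intro hsub
            obtain ⟨p, hp⟩ := (subword_iff _ _).mp hsub
            rw [hu] at hp
            obtain ⟨hpL, hple⟩ := occ_of_take
              (fun h => by rw [← List.length_eq_zero_iff] at h; omega) hp
            exact hmin p (by omega) (Or.inl hpL)
          · intro hsub
            obtain ⟨p, hp⟩ := (subword_iff _ _).mp hsub
            rw [hu] at hp
            obtain ⟨hpL, hple⟩ := occ_of_take
              (fun h => by rw [← List.length_eq_zero_iff, hVlen' w] at h; omega) hp
            exact hmin p (by have := hVlen' w; omega) (Or.inr hpL)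
        · exact hval.2.1 v hv2
      all_goals {
        have hTflat : ((wfacList w (u₂ :: us₂) eps).map FreeGroup.toWord).flatten
            = r.toWord := (valid_join hval).symm
        have hflat : ((wfacList w (u :: u₂ :: us₂) (e :: eps)).map FreeGroup.toWord).flatten
            = L := by
          rw [wfac_cons]
          simp only [List.map_cons, List.flatten_cons]
          rw [hTflat, hu, hr]
          have hsplit := occ_split hXocc
          rw [hXlen] at hsplit
          rw [← List.append_assoc, ← hsplit]
        first
          | exact (redProd_of_redL_join _ (hflat ▸ hLred)).1
          | (rw [prod_eq_mk_join, hflat, hLdef, FreeGroup.mk_toWord])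
      }
    · refine ⟨([g], []), by simp, ?_, ?_, ?_⟩
      · intro v hv
        rcases List.mem_cons.mp hv with rfl | hv2
        · constructor
          · intro hsub
            obtain ⟨p, hp⟩ := (subword_iff _ _).mp hsub
            exact hocc ⟨p, Or.inl hp⟩
          · intro hsub
            obtain ⟨p, hp⟩ := (subword_iff _ _).mp hsub
            exact hocc ⟨p, Or.inr hp⟩
        · simp at hv2
      · rw [wfac_single]
        show wlen _ = _
        simp
      · rw [wfac_single]
        simp

end BF
namespace BF
variable {α : Type} [DecidableEq α]
open FreeGroup List

theorem valid_shape {w g : FreeGroup α} {f : List (FreeGroup α) × List Bool}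
    (h : Valid w g f) :
    (∃ u, f = ([u], [])) ∨
    (∃ u u₂ us₂ e eps, f = (u :: u₂ :: us₂, e :: eps)) := by
  obtain ⟨us, eps⟩ := f
  have hlen := h.1
  simp only at hlen
  match us, eps, hlen with
  | [u], [], _ => exact Or.inl ⟨u, rfl⟩
  | u :: u₂ :: us₂, e :: eps, _ => exact Or.inr ⟨u, u₂, us₂, e, eps, rfl⟩
  | [u], e :: eps, hlen => simp at hlen
  | u :: u₂ :: us₂, [], hlen => simp at hlen

theorem valid_cons_decomp {w g : FreeGroup α} {u u₂ : FreeGroup α}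
    {us₂ : List (FreeGroup α)} {e : Bool} {eps : List Bool}
    (h : Valid w g (u :: u₂ :: us₂, e :: eps)) :
    Occ (if e then w else w⁻¹).toWord g.toWord u.toWord.length ∧
    u.toWord = g.toWord.take u.toWord.length ∧
    Valid w (FreeGroup.mk (g.toWord.drop (u.toWord.length + w.toWord.length)))
      (u₂ :: us₂, eps) := by
  have hBlen : ((if e then w else w⁻¹) : FreeGroup α).toWord.length = w.toWord.length := by
    cases e <;> simp [hVlen' w]
  have hj : g.toWord = u.toWord ++ (((if e then w else w⁻¹) : FreeGroup α).toWord ++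
      ((wfacList w (u₂ :: us₂) eps).map FreeGroup.toWord).flatten) := by
    have := valid_join h
    rw [wfac_cons] at this
    simpa using this
  set A := u.toWord with hA
  set B := ((if e then w else w⁻¹) : FreeGroup α).toWord with hB
  set T := ((wfacList w (u₂ :: us₂) eps).map FreeGroup.toWord).flatten with hT
  have hocc : Occ B g.toWord A.length := by
    unfold Occ
    rw [hj, List.drop_left, List.take_left]
  have htake : A = g.toWord.take A.length := by
    rw [hj, List.take_left]
  have hj2 : g.toWord = (A ++ B) ++ T := by rw [hj, List.append_assoc]
  have hdropT : g.toWord.drop (A.length + B.length) = T := by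
    rw [hj2, ← List.length_append, List.drop_left]
  refine ⟨hocc, htake, ?_, ?_, ?_, ?_⟩
  · have := h.1
    simp only [List.length_cons] at this ⊢
    omega
  · intro v hv
    exact h.2.1 v (List.mem_cons_of_mem u hv)
  · have hred : RedL T := hdropT ▸ redL_infix (redL_toWord g) (drop_infix _ _)
    exact (redProd_of_redL_join _ hred).1
  · rw [prod_eq_mk_join, ← hT, ← hdropT, hBlen]

theorem head_pos_le (w : FreeGroup α) (hw : NonSelfOverlapping w) (hw1 : w ≠ 1)
    {L : List (α × Bool)} (hL : RedL L) {X X' : List (α × Bool)} {s s' : ℕ}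
    (hX : X = w.toWord ∨ X = (w⁻¹).toWord) (hX' : X' = w.toWord ∨ X' = (w⁻¹).toWord)
    (h1 : Occ X L s) (h2 : Occ X' L s') {u' : FreeGroup α}
    (hu' : ¬Subword w u' ∧ ¬Subword w⁻¹ u') (hu'w : u'.toWord = L.take s')
    (hlt : s < s') : False := by
  have hXlen : X.length = w.toWord.length := by rcases hX with h | h <;> simp [h, hVlen' w]
  by_cases hcase : s' < s + w.toWord.length
  · exact occ_no_overlap w hw hw1 hL hX hX' h1 h2 hlt hcase
  · have h3 : Occ X (L.take s') s := occ_take h1 (by omega)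
    have hinf := occ_infix h3
    rw [← hu'w] at hinf
    rcases hX with rfl | rfl
    · exact hu'.1 hinf
    · exact hu'.2 hinf

theorem ite_toWord_or (w : FreeGroup α) (e : Bool) :
    ((if e then w else w⁻¹) : FreeGroup α).toWord = w.toWord ∨
    ((if e then w else w⁻¹) : FreeGroup α).toWord = (w⁻¹).toWord := by
  cases e
  · exact Or.inr (by simp)
  · exact Or.inl (by simp)

theorem valid_unique (w : FreeGroup α) (hw : NonSelfOverlapping w) (hw1 : w ≠ 1) :
    ∀ N : ℕ, ∀ g : FreeGroup α, g.toWord.length < N →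
    ∀ f f' : List (FreeGroup α) × List Bool, Valid w g f → Valid w g f' → f = f' := by
  intro N
  induction N with
  | zero => intro g h; omega
  | succ N ih =>
  intro g hlen f f' hf hf'
  have hn : 0 < w.toWord.length := hnpos w hw1
  have hLred : RedL g.toWord := redL_toWord g
  rcases valid_shape hf with ⟨u, rfl⟩ | ⟨u, u₂, us₂, e, eps, rfl⟩ <;>
    rcases valid_shape hf' with ⟨u', rfl⟩ | ⟨u', u₂', us₂', e', eps', rfl⟩
  · -- single / single
    have hL : g.toWord = u.toWord := by simpa [wfac_single] using valid_join hf
    have hL' : g.toWord = u'.toWord := by simpa [wfac_single] using valid_join hf'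
    have : u = u' := FreeGroup.toWord_injective (hL ▸ hL')
    rw [this]
  · -- single / cons : contradiction
    exfalso
    have hL : g.toWord = u.toWord := by simpa [wfac_single] using valid_join hf
    have D' := valid_cons_decomp hf'
    have hinf := occ_infix D'.1
    rw [hL] at hinf
    have hu := hf.2.1 u (by simp)
    cases e'
    · simp only [Bool.false_eq_true, if_false] at hinf
      exact hu.2 hinf
    · simp only [if_true] at hinf
      exact hu.1 hinf
  · -- cons / single : contradiction
    exfalso
    have hL : g.toWord = u'.toWord := by simpa [wfac_single] using valid_join hf'
    have D := valid_cons_decomp hf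
    have hinf := occ_infix D.1
    rw [hL] at hinf
    have hu := hf'.2.1 u' (by simp)
    cases e
    · simp only [Bool.false_eq_true, if_false] at hinf
      exact hu.2 hinf
    · simp only [if_true] at hinf
      exact hu.1 hinf
  · -- cons / cons
    have D := valid_cons_decomp hf
    have D' := valid_cons_decomp hf'
    have hseq : u.toWord.length = u'.toWord.length := by
      rcases lt_trichotomy u.toWord.length u'.toWord.length with h | h | h
      · exact absurd h (fun h => head_pos_le w hw hw1 hLred (ite_toWord_or w e)
          (ite_toWord_or w e') D.1 D'.1 (hf'.2.1 u' (by simp)) D'.2.1 h)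
      · exact h
      · exact absurd h (fun h => head_pos_le w hw hw1 hLred (ite_toWord_or w e')
          (ite_toWord_or w e) D'.1 D.1 (hf.2.1 u (by simp)) D.2.1 h)
    have huu' : u = u' := by
      apply FreeGroup.toWord_injective
      rw [D.2.1, D'.2.1, hseq]
    have hBlen : ((if e then w else w⁻¹) : FreeGroup α).toWord.length
        = w.toWord.length := by cases e <;> simp [hVlen' w]
    have hBlen' : ((if e' then w else w⁻¹) : FreeGroup α).toWord.length
        = w.toWord.length := by cases e' <;> simp [hVlen' w]
    have hXX' : ((if e then w else w⁻¹) : FreeGroup α).toWord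
        = ((if e' then w else w⁻¹) : FreeGroup α).toWord := by
      have o1 : (g.toWord.drop u.toWord.length).take w.toWord.length
          = ((if e then w else w⁻¹) : FreeGroup α).toWord := by
        have := D.1; unfold Occ at this; rw [hBlen] at this; exact this
      have o2 : (g.toWord.drop u.toWord.length).take w.toWord.length
          = ((if e' then w else w⁻¹) : FreeGroup α).toWord := by
        have := D'.1; unfold Occ at this; rw [hBlen', ← hseq] at this; exact this
      rw [← o1, ← o2]
    have hee : e = e' := by
      have hXeq : ((if e then w else w⁻¹) : FreeGroup α) = (if e' then w else w⁻¹) :=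
        FreeGroup.toWord_injective hXX'
      cases e <;> cases e' <;> simp only [if_true, Bool.false_eq_true, if_false] at hXeq
      · rfl
      · exact absurd (congrArg FreeGroup.toWord hXeq.symm) (WneV w hw1)
      · exact absurd (congrArg FreeGroup.toWord hXeq) (WneV w hw1)
      · rfl
    -- tails
    have hvt := D.2.2
    have hvt' := D'.2.2
    rw [← hseq] at hvt'
    have hocc := D.1
    have hle : u.toWord.length + w.toWord.length ≤ g.toWord.length := by
      have := occ_le (X := ((if e then w else w⁻¹) : FreeGroup α).toWord)
        (by intro hnil; rw [← List.length_eq_zero_iff] at hnil; omega) hocc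
      omega
    have hrlen : (FreeGroup.mk
        (g.toWord.drop (u.toWord.length + w.toWord.length))).toWord.length < N := by
      rw [toWord_mk_of_redL (redL_infix hLred (drop_infix _ _)), List.length_drop]
      omega
    have heq := ih _ hrlen _ _ hvt hvt'
    simp only [Prod.mk.injEq, List.cons.injEq] at heq ⊢
    exact ⟨⟨huu', heq.1⟩, hee, heq.2⟩

end BF

/-- Example 3.5: for a nontrivial non self-overlapping word `w`, every
`g ∈ F` can be uniquely written as a reduced product `g = u₁ w^{ε₁} u₂ ⋯ u_{k−1}
w^{ε_{k−1}} u_k` where no `u_j` contains `w` or `w⁻¹` as a subword. -/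
theorem brooks_factorization_unique {α : Type} [Fintype α] [DecidableEq α]
    (hab : ∃ a b : α, a ≠ b) (w : FreeGroup α)
    (hw : NonSelfOverlapping w) (hw1 : w ≠ 1) (g : FreeGroup α) :
    ∃! f : List (FreeGroup α) × List Bool,
      f.1.length = f.2.length + 1 ∧
      (∀ u ∈ f.1, ¬Subword w u ∧ ¬Subword w⁻¹ u) ∧
      ReducedProd (wfacList w f.1 f.2) ∧
      g = (wfacList w f.1 f.2).prod := by
  obtain ⟨f, hf⟩ := BF.exists_valid w hw hw1 (g.toWord.length + 1) g (by omega)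
  refine ⟨f, hf, ?_⟩
  intro f' hf'
  exact BF.valid_unique w hw hw1 (g.toWord.length + 1) g (by omega) f' f hf' hf
end
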